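/- arXiv:2004.05613 — 12 statements merged into one kernel-verified Lean document; each statement's English description precedes it below -/
import Mathlib

section
/- Let T : ℂ^{n×n} → ℂ^{k×k} be a linear map that sends positive semidefinite matrices to positive semidefinite matrices. Then for any two positive definite matrices X, Y ∈ ℂ^{n×n} and any matrix A ∈ ℂ^{n×n}, one has ker(T(X)) = ker(T(Y)) ⊆ ker(T(A)). -/
open Matrix
open scoped ComplexOrder

private lemma smul_psd {m : ℕ} {c : ℝ} (hc : 0 ≤ c) {M : Matrix (Fin m) (Fin m) ℂ}
    (hM : M.PosSemidef) : ((c : ℂ) • M).PosSemidef := by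
  refine PosSemidef.of_dotProduct_mulVec_nonneg ?_ (fun x => ?_)
  · have := hM.1
    simp only [IsHermitian, conjTranspose_smul] at this ⊢
    rw [this]
    congr 1
    simp [Complex.star_def, Complex.conj_ofReal]
  · rw [smul_mulVec, dotProduct_smul]
    have h0 : (0:ℂ) ≤ (c:ℂ) := by exact_mod_cast hc
    exact mul_nonneg h0 (hM.dotProduct_mulVec_nonneg x)

private lemma shift_le {m : ℕ} {H : Matrix (Fin m) (Fin m) ℂ} (hH : H.IsHermitian)
    {c : ℝ} (hc : ∀ i, hH.eigenvalues i ≤ c) : ((c : ℂ) • 1 - H).PosSemidef := by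
  have hU : (hH.eigenvectorUnitary : Matrix (Fin m) (Fin m) ℂ) *
      star (hH.eigenvectorUnitary : Matrix (Fin m) (Fin m) ℂ) = 1 :=
    (Matrix.mem_unitaryGroup_iff).mp hH.eigenvectorUnitary.2
  have key : (c : ℂ) • 1 - H =
      (hH.eigenvectorUnitary : Matrix (Fin m) (Fin m) ℂ) *
        diagonal (RCLike.ofReal ∘ fun i => c - hH.eigenvalues i) *
        star (hH.eigenvectorUnitary : Matrix (Fin m) (Fin m) ℂ) := by
    have hd : diagonal (RCLike.ofReal ∘ fun i => c - hH.eigenvalues i) =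
        (c : ℂ) • (1 : Matrix (Fin m) (Fin m) ℂ) - diagonal (RCLike.ofReal ∘ hH.eigenvalues) := by
      ext i j
      rcases eq_or_ne i j with rfl | h
      · simp [Matrix.diagonal_apply_eq, Matrix.one_apply_eq, Complex.ofReal_sub]
      · simp [Matrix.diagonal_apply_ne _ h, Matrix.one_apply_ne h]
    rw [hd, Matrix.mul_sub, Matrix.sub_mul, mul_smul_comm, mul_one, smul_mul_assoc, hU,
      ← Unitary.conjStarAlgAut_apply (S := ℂ), ← hH.spectral_theorem]
  rw [key]
  exact (posSemidef_diagonal_iff.mpr fun i => by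
    simpa using (by exact_mod_cast sub_nonneg.mpr (hc i) : (0:ℂ) ≤ ((c - hH.eigenvalues i : ℝ) : ℂ))).mul_mul_conjTranspose_same _

private lemma shift_ge {m : ℕ} {H : Matrix (Fin m) (Fin m) ℂ} (hH : H.IsHermitian)
    {d : ℝ} (hd : ∀ i, d ≤ hH.eigenvalues i) : (H - (d : ℂ) • 1).PosSemidef := by
  have hU : (hH.eigenvectorUnitary : Matrix (Fin m) (Fin m) ℂ) *
      star (hH.eigenvectorUnitary : Matrix (Fin m) (Fin m) ℂ) = 1 :=
    (Matrix.mem_unitaryGroup_iff).mp hH.eigenvectorUnitary.2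
  have key : H - (d : ℂ) • 1 =
      (hH.eigenvectorUnitary : Matrix (Fin m) (Fin m) ℂ) *
        diagonal (RCLike.ofReal ∘ fun i => hH.eigenvalues i - d) *
        star (hH.eigenvectorUnitary : Matrix (Fin m) (Fin m) ℂ) := by
    have hd' : diagonal (RCLike.ofReal ∘ fun i => hH.eigenvalues i - d) =
        diagonal (RCLike.ofReal ∘ hH.eigenvalues) - (d : ℂ) • (1 : Matrix (Fin m) (Fin m) ℂ) := by
      ext i j
      rcases eq_or_ne i j with rfl | h
      · simp [Matrix.diagonal_apply_eq, Matrix.one_apply_eq, Complex.ofReal_sub]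
      · simp [Matrix.diagonal_apply_ne _ h, Matrix.one_apply_ne h]
    rw [hd', Matrix.mul_sub, Matrix.sub_mul, mul_smul_comm, mul_one, smul_mul_assoc, hU,
      ← Unitary.conjStarAlgAut_apply (S := ℂ), ← hH.spectral_theorem]
  rw [key]
  exact (posSemidef_diagonal_iff.mpr fun i => by
    simpa using (by exact_mod_cast sub_nonneg.mpr (hd i) : (0:ℂ) ≤ ((hH.eigenvalues i - d : ℝ) : ℂ))).mul_mul_conjTranspose_same _

/-- Every PSD matrix is dominated by a positive multiple of a positive definite matrix. -/
private lemma dominate {m : ℕ} {X P : Matrix (Fin m) (Fin m) ℂ} (hX : X.PosDef)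
    (hP : P.PosSemidef) : ∃ c : ℝ, 0 < c ∧ ((c : ℂ) • X - P).PosSemidef := by
  rcases isEmpty_or_nonempty (Fin m) with hm | hm
  · refine ⟨1, one_pos, ?_⟩
    have : ((1:ℝ) : ℂ) • X - P = 0 := Subsingleton.elim _ _
    rw [this]
    exact Matrix.PosSemidef.zero
  · set δ : ℝ := Finset.univ.inf' (Finset.univ_nonempty) hX.1.eigenvalues with hδdef
    have hδpos : 0 < δ := by
      rw [hδdef]
      exact (Finset.lt_inf'_iff _).mpr fun i _ => hX.eigenvalues_pos i
    have hδle : ∀ i, δ ≤ hX.1.eigenvalues i := fun i =>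
      Finset.inf'_le _ (Finset.mem_univ i)
    set μ : ℝ := ∑ i, hP.1.eigenvalues i with hμdef
    have hμle : ∀ i, hP.1.eigenvalues i ≤ μ := fun i =>
      Finset.single_le_sum (fun j _ => hP.eigenvalues_nonneg j) (Finset.mem_univ i)
    have hμ0 : 0 ≤ μ := Finset.sum_nonneg fun j _ => hP.eigenvalues_nonneg j
    refine ⟨(μ + 1) / δ, by positivity, ?_⟩
    set c : ℝ := (μ + 1) / δ with hcdef
    have hc0 : 0 ≤ c := by positivity
    have hcδ : c * δ = μ + 1 := div_mul_cancel₀ _ hδpos.ne'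
    have hsplit : (c : ℂ) • X - P = (c : ℂ) • (X - (δ : ℂ) • 1) + ((↑(c * δ) : ℂ) • 1 - P) := by
      push_cast
      module
    rw [hsplit]
    exact (smul_psd hc0 (shift_ge hX.1 hδle)).add
      (shift_le hP.1 fun i => (hμle i).trans (by rw [hcδ]; linarith))

/-- Every Hermitian matrix is a difference of two PSD matrices. -/
private lemma herm_decomp {m : ℕ} {H : Matrix (Fin m) (Fin m) ℂ} (hH : H.IsHermitian) :
    ∃ P Q : Matrix (Fin m) (Fin m) ℂ, P.PosSemidef ∧ Q.PosSemidef ∧ H = P - Q := by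
  set t : ℝ := ∑ i, |hH.eigenvalues i| with htdef
  have ht0 : 0 ≤ t := Finset.sum_nonneg fun j _ => abs_nonneg _
  have htle : ∀ i, -t ≤ hH.eigenvalues i := by
    intro i
    have h1 : |hH.eigenvalues i| ≤ t :=
      Finset.single_le_sum (f := fun j => |hH.eigenvalues j|) (fun j _ => abs_nonneg _) (Finset.mem_univ i)
    have := neg_abs_le (hH.eigenvalues i)
    linarith
  refine ⟨H + (t : ℂ) • 1, (t : ℂ) • 1, ?_, smul_psd ht0 Matrix.PosSemidef.one, by abel⟩
  have := shift_ge hH htle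
  have heq : H - ((-t : ℝ) : ℂ) • 1 = H + (t : ℂ) • 1 := by push_cast; module
  rwa [heq] at this

/-- For a positive linear map `T` on complex matrices, the kernel of `T X` is the same
for every positive definite `X`, and is contained in the kernel of `T A` for any `A`. -/
theorem kernel_of_positive_map_eq
    {n k : ℕ} (T : Matrix (Fin n) (Fin n) ℂ →ₗ[ℂ] Matrix (Fin k) (Fin k) ℂ)
    (hT : ∀ A : Matrix (Fin n) (Fin n) ℂ, A.PosSemidef → (T A).PosSemidef)
    (X Y A : Matrix (Fin n) (Fin n) ℂ) (hX : X.PosDef) (hY : Y.PosDef) :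
    LinearMap.ker (T X).mulVecLin = LinearMap.ker (T Y).mulVecLin ∧
      LinearMap.ker (T X).mulVecLin ≤ LinearMap.ker (T A).mulVecLin := by
  have step : ∀ (Z : Matrix (Fin n) (Fin n) ℂ), Z.PosDef → ∀ ψ : Fin k → ℂ,
      (T Z) *ᵥ ψ = 0 → ∀ B : Matrix (Fin n) (Fin n) ℂ, (T B) *ᵥ ψ = 0 := by
    intro Z hZ ψ hψ B
    have psd_case : ∀ P : Matrix (Fin n) (Fin n) ℂ, P.PosSemidef → (T P) *ᵥ ψ = 0 := by
      intro P hP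
      obtain ⟨c, hc, hsub⟩ := dominate hZ hP
      have h1 := (hT _ hsub).dotProduct_mulVec_nonneg ψ
      rw [map_sub, _root_.map_smul, sub_mulVec, smul_mulVec, hψ, smul_zero, zero_sub,
        dotProduct_neg] at h1
      have h2 : star ψ ⬝ᵥ (T P) *ᵥ ψ ≤ 0 := by
        have := neg_nonneg.mp h1
        exact this
      exact ((hT P hP).dotProduct_mulVec_zero_iff ψ).mp (le_antisymm h2 ((hT P hP).dotProduct_mulVec_nonneg ψ))
    have hH1 : (B + Bᴴ).IsHermitian := by
      simp [IsHermitian, conjTranspose_add, add_comm]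
    have hH2 : (Complex.I • (B - Bᴴ)).IsHermitian := by
      simp only [IsHermitian, conjTranspose_smul, conjTranspose_sub,
        conjTranspose_conjTranspose, Complex.star_def, Complex.conj_I, neg_smul, smul_sub]
      module
    obtain ⟨P1, Q1, hP1, hQ1, he1⟩ := herm_decomp hH1
    obtain ⟨P2, Q2, hP2, hQ2, he2⟩ := herm_decomp hH2
    have hBeq : B = (2⁻¹ : ℂ) • (P1 - Q1) + (-(Complex.I) / 2) • (P2 - Q2) := by
      rw [← he1, ← he2]
      have hI : (-(Complex.I) / 2) * Complex.I = 2⁻¹ := by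
        rw [div_mul_eq_mul_div, neg_mul, Complex.I_mul_I, neg_neg]
        norm_num
      rw [smul_smul, hI]
      module
    rw [hBeq]
    simp [map_add, map_sub, _root_.map_smul, add_mulVec, sub_mulVec, smul_mulVec,
      psd_case P1 hP1, psd_case Q1 hQ1, psd_case P2 hP2, psd_case Q2 hQ2]
  constructor
  · apply le_antisymm
    · intro ψ hψ
      rw [LinearMap.mem_ker, mulVecLin_apply] at hψ ⊢
      exact step X hX ψ hψ Y
    · intro ψ hψ
      rw [LinearMap.mem_ker, mulVecLin_apply] at hψ ⊢
      exact step Y hY ψ hψ X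
  · intro ψ hψ
    rw [LinearMap.mem_ker, mulVecLin_apply] at hψ ⊢
    exact step X hX ψ hψ A
end

section
/- Let T : ℂ^{n×n} → ℂ^{k×k} be completely positive with Kraus decomposition T(A) = Σᵢ Kᵢ* A Kᵢ. Then T is strictly positive if and only if the intersection of the kernels of the Kraus operators Kᵢ is {0}. -/
open Matrix
open scoped ComplexOrder

lemma quad_form_conj {n k : ℕ} (K : Matrix (Fin n) (Fin k) ℂ)
    (X : Matrix (Fin n) (Fin n) ℂ) (x : Fin k → ℂ) :
    star x ⬝ᵥ (Kᴴ * X * K).mulVec x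
      = star (K.mulVec x) ⬝ᵥ X.mulVec (K.mulVec x) := by
  rw [← Matrix.mulVec_mulVec, ← Matrix.mulVec_mulVec, Matrix.dotProduct_mulVec,
    ← Matrix.star_mulVec]

/-- A completely positive map given by a Kraus decomposition `T A = ∑ i, (K i)ᴴ * A * K i`
is strictly positive iff the kernels of the Kraus operators intersect trivially. -/
theorem strictly_positive_iff_kraus_kernels
    {n k : ℕ} {ι : Type*} [Fintype ι]
    (T : Matrix (Fin n) (Fin n) ℂ →ₗ[ℂ] Matrix (Fin k) (Fin k) ℂ)
    (K : ι → Matrix (Fin n) (Fin k) ℂ)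
    (hKraus : ∀ A : Matrix (Fin n) (Fin n) ℂ, T A = ∑ i, (K i)ᴴ * A * K i) :
    (∀ X : Matrix (Fin n) (Fin n) ℂ, X.PosDef → (T X).PosDef) ↔
      (⨅ i, LinearMap.ker (K i).mulVecLin) = ⊥ := by
  have key : ∀ (X : Matrix (Fin n) (Fin n) ℂ) (x : Fin k → ℂ),
      star x ⬝ᵥ (T X).mulVec x
        = ∑ i, star ((K i).mulVec x) ⬝ᵥ X.mulVec ((K i).mulVec x) := by
    intro X x
    have hs : (∑ i, (K i)ᴴ * X * K i) *ᵥ x = ∑ i, ((K i)ᴴ * X * K i) *ᵥ x := by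
      ext j
      simp [Matrix.mulVec, dotProduct, Matrix.sum_apply, Finset.sum_mul]
      rw [Finset.sum_comm]
    have hd : ∀ (w : ι → Fin k → ℂ), star x ⬝ᵥ ∑ i, w i = ∑ i, star x ⬝ᵥ w i := by
      intro w
      simp only [dotProduct, Finset.sum_apply, Finset.mul_sum]
      exact Finset.sum_comm
    rw [hKraus, hs, hd]
    exact Finset.sum_congr rfl fun i _ => quad_form_conj (K i) X x
  constructor
  · intro h
    rw [Submodule.eq_bot_iff]
    intro v hv
    by_contra hv0
    have hPD := h 1 Matrix.PosDef.one
    have := hPD.dotProduct_mulVec_pos hv0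
    rw [key] at this
    simp only [Submodule.mem_iInf, LinearMap.mem_ker, Matrix.mulVecLin_apply] at hv
    have : (0 : ℂ) < 0 := by
      convert this using 2
      refine (Finset.sum_eq_zero fun i _ => ?_).symm
      rw [hv i]
      simp
    exact lt_irrefl _ this
  · intro h X hX
    have herm : (T X).IsHermitian := by
      rw [hKraus]
      unfold Matrix.IsHermitian
      rw [Matrix.conjTranspose_sum]
      exact Finset.sum_congr rfl fun i _ =>
        (hX.posSemidef.conjTranspose_mul_mul_same (K i)).1
    refine Matrix.PosDef.of_dotProduct_mulVec_pos herm (fun v hv0 => ?_)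
    rw [key]
    have : ∃ i, (K i).mulVec v ≠ 0 := by
      by_contra hc
      push_neg at hc
      apply hv0
      have : v ∈ ⨅ i, LinearMap.ker (K i).mulVecLin := by
        simp only [Submodule.mem_iInf, LinearMap.mem_ker, Matrix.mulVecLin_apply]
        exact hc
      rwa [h, Submodule.mem_bot] at this
    obtain ⟨i, hi⟩ := this
    refine Finset.sum_pos' (fun j _ => hX.posSemidef.dotProduct_mulVec_nonneg _) ⟨i, Finset.mem_univ i, hX.dotProduct_mulVec_pos hi⟩
end

section
/- If a linear map T : ℂ^{n×n} → ℂ^{k×k} is both completely positive and strictly positive, then T ⊗ id_m is strictly positive for every m ∈ ℕ (i.e. T is completely strictly positive). -/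
open Matrix
open scoped ComplexOrder

/-- The map `T ⊗ id_m` acting on `ℂ^{nm × nm} ≅ ℂ^{n×n} ⊗ ℂ^{m×m}`, in block form:
`((T ⊗ id_m) A)_{(i,a),(j,b)} = T(A^{ab})_{i,j}` where `A^{ab}_{ij} = A_{(i,a),(j,b)}`. -/
noncomputable def tensorId {n k : ℕ}
    (T : Matrix (Fin n) (Fin n) ℂ →ₗ[ℂ] Matrix (Fin k) (Fin k) ℂ) (m : ℕ)
    (A : Matrix (Fin n × Fin m) (Fin n × Fin m) ℂ) :
    Matrix (Fin k × Fin m) (Fin k × Fin m) ℂ :=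
  Matrix.of fun p q => T (Matrix.of fun i j => A (i, p.2) (j, q.2)) p.1 q.1

/-- Shifting a Hermitian matrix down by its least eigenvalue gives a PSD matrix. -/
lemma sub_smul_one_posSemidef {N : Type*} [Fintype N] [DecidableEq N]
    {A : Matrix N N ℂ} (hA : A.IsHermitian) (c : ℝ)
    (hc : ∀ i, c ≤ hA.eigenvalues i) : (A - (c : ℂ) • 1).PosSemidef := by
  set U : Matrix N N ℂ := (hA.eigenvectorUnitary : Matrix N N ℂ) with hUdef
  have hU : U * star U = 1 := Matrix.mem_unitaryGroup_iff.mp hA.eigenvectorUnitary.2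
  have hD : (Matrix.diagonal (fun i => ((hA.eigenvalues i - c : ℝ) : ℂ))).PosSemidef := by
    refine Matrix.posSemidef_diagonal_iff.mpr fun i => ?_
    rw [Complex.zero_le_real]
    linarith [hc i]
  have key : A - (c : ℂ) • 1
      = U * Matrix.diagonal (fun i => ((hA.eigenvalues i - c : ℝ) : ℂ)) * Uᴴ := by
    have : Matrix.diagonal (fun i => ((hA.eigenvalues i - c : ℝ) : ℂ))
        = Matrix.diagonal (RCLike.ofReal ∘ hA.eigenvalues) - (c : ℂ) • 1 := by
      ext i j
      by_cases h : i = j <;>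
        simp [Matrix.diagonal, h, Matrix.one_apply, Complex.ofReal_sub, sub_eq_add_neg]
    rw [this, Matrix.mul_sub, Matrix.sub_mul, ← Matrix.star_eq_conjTranspose]
    rw [Matrix.mul_smul, Matrix.mul_one, Matrix.smul_mul, hU]
    have hs := hA.spectral_theorem
    rw [Unitary.conjStarAlgAut_apply] at hs
    exact congrArg (fun X => X - (c : ℂ) • 1) hs
  rw [key]
  simpa using hD.mul_mul_conjTranspose_same U

/-- If a linear map is completely positive and strictly positive, then it is
completely strictly positive: `T ⊗ id_m` is strictly positive for every `m`. -/
theorem completely_strictly_positive_of_cp_sp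
    {n k : ℕ} (T : Matrix (Fin n) (Fin n) ℂ →ₗ[ℂ] Matrix (Fin k) (Fin k) ℂ)
    (hCP : ∀ (m : ℕ) (A : Matrix (Fin n × Fin m) (Fin n × Fin m) ℂ),
      A.PosSemidef → (tensorId T m A).PosSemidef)
    (hSP : ∀ X : Matrix (Fin n) (Fin n) ℂ, X.PosDef → (T X).PosDef) :
    ∀ (m : ℕ) (A : Matrix (Fin n × Fin m) (Fin n × Fin m) ℂ),
      A.PosDef → (tensorId T m A).PosDef := by
  intro m A hA
  -- trivial cases: empty target index
  rcases Nat.eq_zero_or_pos k with hk | hk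
  · subst hk
    refine ⟨?_, fun x hx => absurd ?_ hx⟩
    · ext p q; exact absurd p.1.2 (by omega)
    · ext p; exact absurd p.1.2 (by omega)
  rcases Nat.eq_zero_or_pos m with hm | hm
  · subst hm
    refine ⟨?_, fun x hx => absurd ?_ hx⟩
    · ext p q; exact absurd p.2.2 (by omega)
    · ext p; exact absurd p.2.2 (by omega)
  rcases Nat.eq_zero_or_pos n with hn | hn
  · -- n = 0: T(1) = T(0) = 0 must be PosDef on a nonempty index, contradiction
    exfalso
    subst hn
    have h1 : (1 : Matrix (Fin 0) (Fin 0) ℂ).PosDef :=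
      ⟨by ext i j; exact absurd i.2 (by omega), fun x hx => absurd (by ext i; exact absurd i.2 (by omega)) hx⟩
    have h0 : (1 : Matrix (Fin 0) (Fin 0) ℂ) = 0 := by
      ext i j; exact absurd i.2 (by omega)
    have := hSP 1 h1
    rw [h0, map_zero] at this
    have := this.dotProduct_mulVec_pos (x := fun _ => 1) (by
      intro h
      have h2 := congrFun h (⟨0, hk⟩ : Fin k)
      simpa using h2)
    simp at this
  -- main case
  haveI : NeZero n := ⟨by omega⟩
  haveI : NeZero m := ⟨by omega⟩
  obtain ⟨i₀, hi₀⟩ := Finite.exists_min hA.1.eigenvalues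
  set c : ℝ := hA.1.eigenvalues i₀ with hc
  have hcpos : 0 < c := hA.eigenvalues_pos i₀
  have hsub : (A - (c : ℂ) • 1).PosSemidef := sub_smul_one_posSemidef hA.1 c hi₀
  -- the block matrix T(1) ⊗ I_m
  set B : Matrix (Fin k) (Fin k) ℂ := T 1 with hB
  have hBpd : B.PosDef := hSP 1 Matrix.PosDef.one
  set M : Matrix (Fin k × Fin m) (Fin k × Fin m) ℂ :=
    Matrix.of (fun p q => if p.2 = q.2 then B p.1 q.1 else 0) with hM
  have hMpd : M.PosDef := by
    refine Matrix.PosDef.of_dotProduct_mulVec_pos ?_ ?_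
    · ext p q
      simp only [hM, Matrix.conjTranspose_apply, Matrix.of_apply]
      by_cases h : q.2 = p.2
      · have h' : p.2 = q.2 := h.symm
        rw [if_pos h, if_pos h']
        exact (Matrix.conjTranspose_apply B q.1 p.1).symm.trans
          (congrFun (congrFun hBpd.1 p.1) q.1)
      · rw [if_neg h, if_neg (fun hh => h hh.symm), star_zero]
    · intro x hx
      have hrow : ∀ (i : Fin k) (a : Fin m),
          (M.mulVec x) (i, a) = (B.mulVec (fun j => x (j, a))) i := by
        intro i a
        simp only [Matrix.mulVec, dotProduct, hM, Matrix.of_apply]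
        rw [Fintype.sum_prod_type]
        refine Finset.sum_congr rfl fun j _ => ?_
        rw [Finset.sum_eq_single a]
        · simp
        · intro b _ hb
          simp [Ne.symm hb]
        · simp
      have hquad : star x ⬝ᵥ M.mulVec x
          = ∑ a : Fin m, ∑ i : Fin k, star (x (i, a)) * (B.mulVec (fun j => x (j, a))) i := by
        simp only [dotProduct, Pi.star_apply]
        rw [Fintype.sum_prod_type, Finset.sum_comm]
        exact Finset.sum_congr rfl fun a _ => Finset.sum_congr rfl fun i _ => by rw [hrow]
      rw [hquad]
      obtain ⟨⟨i₁, a₁⟩, hxa⟩ : ∃ p, x p ≠ 0 := by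
        by_contra h
        push_neg at h
        exact hx (funext h)
      refine Finset.sum_pos' (fun a _ => hBpd.posSemidef.dotProduct_mulVec_nonneg (fun j => x (j, a)))
        ⟨a₁, Finset.mem_univ _, ?_⟩
      exact hBpd.dotProduct_mulVec_pos (x := fun j => x (j, a₁)) (fun h => hxa (congrFun h i₁))
  -- decomposition
  have hdec : tensorId T m A = tensorId T m (A - (c : ℂ) • 1) + (c : ℂ) • M := by
    ext p q
    simp only [tensorId, Matrix.of_apply, Matrix.add_apply, Matrix.smul_apply]
    have hslice : (Matrix.of fun i j => A (i, p.2) (j, q.2) : Matrix (Fin n) (Fin n) ℂ)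
        = (Matrix.of fun i j => (A - (c : ℂ) • 1) (i, p.2) (j, q.2))
          + (c : ℂ) • (Matrix.of fun i j =>
              (if p.2 = q.2 then (1 : Matrix (Fin n) (Fin n) ℂ) i j else 0)) := by
      ext i j
      by_cases h : p.2 = q.2 <;>
        simp [Matrix.sub_apply, Matrix.smul_apply, Matrix.one_apply, h, Prod.ext_iff] <;> ring_nf
    rw [hslice, map_add, _root_.map_smul]
    simp only [Matrix.add_apply, Matrix.smul_apply]
    congr 1
    by_cases h : p.2 = q.2
    · have h1 : (Matrix.of fun i j =>
          (if p.2 = q.2 then (1 : Matrix (Fin n) (Fin n) ℂ) i j else 0))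
          = (1 : Matrix (Fin n) (Fin n) ℂ) := by
        ext i j; simp [h]
      rw [h1]
      simp only [hM, Matrix.of_apply, if_pos h, hB]
    · have h0 : (Matrix.of fun i j =>
          (if p.2 = q.2 then (1 : Matrix (Fin n) (Fin n) ℂ) i j else 0))
          = (0 : Matrix (Fin n) (Fin n) ℂ) := by
        ext i j; simp [h]
      rw [h0, map_zero]
      simp [hM, h]
  rw [hdec]
  have hsmul : ((c : ℂ) • M).PosDef := by
    refine Matrix.PosDef.of_dotProduct_mulVec_pos ?_ ?_
    · show ((c : ℂ) • M)ᴴ = (c : ℂ) • M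
      rw [Matrix.conjTranspose_smul, hMpd.1]
      congr 1
      exact Complex.conj_ofReal c
    · intro x hx
      rw [Matrix.smul_mulVec, dotProduct_smul]
      have := hMpd.dotProduct_mulVec_pos hx
      have hc' : (0 : ℂ) < (c : ℂ) := by exact_mod_cast hcpos
      calc (0 : ℂ) = (c : ℂ) * 0 := by ring
        _ < (c : ℂ) * (star x ⬝ᵥ M.mulVec x) := by
            exact mul_lt_mul_of_pos_left this hc'
        _ = (c : ℂ) • (star x ⬝ᵥ M.mulVec x) := by simp
  exact Matrix.PosDef.posSemidef_add (hCP m _ hsub) hsmul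
end

section
/- Let T : ℂ^{n×n} → ℂ^{k×k} be linear and positive but not strictly positive, and let m = dim ker(T(𝟙)) ≥ 1. Then there exists an orthogonal projection π ∈ ℂ^{k×k} of rank k − m such that π T(A) π = T(A) for all A ∈ ℂ^{n×n}. -/
open Matrix
open scoped ComplexOrder

variable {k : ℕ}

lemma aux_conj_mul (V : Matrix.unitaryGroup (Fin k) ℂ) (a b : Fin k → ℂ) :
    ((V : Matrix (Fin k) (Fin k) ℂ) * diagonal a * star (V : Matrix (Fin k) (Fin k) ℂ)) *
      ((V : Matrix (Fin k) (Fin k) ℂ) * diagonal b * star (V : Matrix (Fin k) (Fin k) ℂ)) =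
    (V : Matrix (Fin k) (Fin k) ℂ) * diagonal (fun i => a i * b i) *
      star (V : Matrix (Fin k) (Fin k) ℂ) := by
  have h1 : star (V : Matrix (Fin k) (Fin k) ℂ) * (V : Matrix (Fin k) (Fin k) ℂ) = 1 :=
    Unitary.coe_star_mul_self V
  have : (V : Matrix (Fin k) (Fin k) ℂ) * diagonal a * star (V : Matrix (Fin k) (Fin k) ℂ) *
      ((V : Matrix (Fin k) (Fin k) ℂ) * diagonal b * star (V : Matrix (Fin k) (Fin k) ℂ)) =
      (V : Matrix (Fin k) (Fin k) ℂ) * diagonal a *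
        ((star (V : Matrix (Fin k) (Fin k) ℂ) * (V : Matrix (Fin k) (Fin k) ℂ)) *
          (diagonal b * star (V : Matrix (Fin k) (Fin k) ℂ))) := by
    simp only [Matrix.mul_assoc]
  rw [this, h1, one_mul, ← Matrix.mul_assoc, Matrix.mul_assoc _ (diagonal a) (diagonal b),
    diagonal_mul_diagonal]

lemma aux_conj_psd (V : Matrix.unitaryGroup (Fin k) ℂ) (f : Fin k → ℝ) (hf : ∀ i, 0 ≤ f i) :
    ((V : Matrix (Fin k) (Fin k) ℂ) * diagonal (fun i => (f i : ℂ)) *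
      star (V : Matrix (Fin k) (Fin k) ℂ)).PosSemidef := by
  rw [star_eq_conjTranspose]
  refine (posSemidef_diagonal_iff.mpr ?_).mul_mul_conjTranspose_same _
  intro i
  exact_mod_cast hf i

lemma aux_smul_one (V : Matrix.unitaryGroup (Fin k) ℂ) (t : ℝ) :
    (t : ℂ) • (1 : Matrix (Fin k) (Fin k) ℂ) =
    (V : Matrix (Fin k) (Fin k) ℂ) * diagonal (fun _ => (t : ℂ)) *
      star (V : Matrix (Fin k) (Fin k) ℂ) := by
  have h1 : (V : Matrix (Fin k) (Fin k) ℂ) * star (V : Matrix (Fin k) (Fin k) ℂ) = 1 :=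
    Unitary.coe_mul_star_self V
  have h2 : diagonal (fun _ : Fin k => (t : ℂ)) = (t : ℂ) • 1 := by
    ext i j
    by_cases h : i = j <;> simp [h, diagonal, Matrix.one_apply, Matrix.smul_apply]
  rw [h2, mul_smul_comm, smul_mul_assoc, mul_one, h1]

lemma aux_conj_sub (V : Matrix.unitaryGroup (Fin k) ℂ) (a b : Fin k → ℂ) :
    ((V : Matrix (Fin k) (Fin k) ℂ) * diagonal a * star (V : Matrix (Fin k) (Fin k) ℂ)) -
      ((V : Matrix (Fin k) (Fin k) ℂ) * diagonal b * star (V : Matrix (Fin k) (Fin k) ℂ)) =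
    (V : Matrix (Fin k) (Fin k) ℂ) * diagonal (fun i => a i - b i) *
      star (V : Matrix (Fin k) (Fin k) ℂ) := by
  have : diagonal (fun i => a i - b i) = diagonal a - diagonal b := by
    rw [diagonal_sub]
  rw [this, Matrix.mul_sub, Matrix.sub_mul]

/-- For a Hermitian `B`, a real `t ≥ 0` with `t•1 - B` and `B + t•1` both PSD. -/
lemma aux_herm_bound {B : Matrix (Fin k) (Fin k) ℂ} (hB : B.IsHermitian) :
    ∃ t : ℝ, 0 ≤ t ∧ ((t : ℂ) • 1 - B).PosSemidef ∧ (B + (t : ℂ) • 1).PosSemidef := by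
  set V := hB.eigenvectorUnitary
  set ev := hB.eigenvalues
  refine ⟨∑ i, |ev i|, Finset.sum_nonneg fun i _ => abs_nonneg _, ?_, ?_⟩
  · rw [hB.spectral_theorem, Unitary.conjStarAlgAut_apply, aux_smul_one V, aux_conj_sub]
    have : ∀ i, (fun i => ((∑ j, |ev j| : ℝ) : ℂ) - (RCLike.ofReal ∘ ev) i) i
        = (((∑ j, |ev j|) - ev i : ℝ) : ℂ) := by intro i; push_cast; rfl
    rw [show (fun i => ((∑ j, |ev j| : ℝ) : ℂ) - (RCLike.ofReal ∘ ev) i)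
        = fun i => (((∑ j, |ev j|) - ev i : ℝ) : ℂ) from funext this]
    refine aux_conj_psd V _ fun i => ?_
    have h1 : ev i ≤ |ev i| := le_abs_self _
    have h2 : |ev i| ≤ ∑ j, |ev j| :=
      Finset.single_le_sum (fun j _ => abs_nonneg (ev j)) (Finset.mem_univ i)
    linarith
  · rw [hB.spectral_theorem, Unitary.conjStarAlgAut_apply, aux_smul_one V]
    have : (fun i : Fin k => ((ev i + ∑ j, |ev j| : ℝ) : ℂ))
        = fun i => (RCLike.ofReal ∘ ev) i + ((∑ j, |ev j| : ℝ) : ℂ) := by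
      funext i; push_cast; rfl
    rw [show ((V : Matrix (Fin k) (Fin k) ℂ) * diagonal (RCLike.ofReal ∘ ev) *
          star (V : Matrix (Fin k) (Fin k) ℂ)) +
        ((V : Matrix (Fin k) (Fin k) ℂ) * diagonal (fun _ => ((∑ j, |ev j| : ℝ) : ℂ)) *
          star (V : Matrix (Fin k) (Fin k) ℂ))
        = (V : Matrix (Fin k) (Fin k) ℂ) * diagonal (fun i => ((ev i + ∑ j, |ev j| : ℝ) : ℂ)) *
          star (V : Matrix (Fin k) (Fin k) ℂ) by
      rw [this]
      have : diagonal (fun i => (RCLike.ofReal ∘ ev) i + ((∑ j, |ev j| : ℝ) : ℂ))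
          = diagonal (RCLike.ofReal ∘ ev) + diagonal (fun _ => ((∑ j, |ev j| : ℝ) : ℂ)) := by
        rw [diagonal_add]
      rw [this, Matrix.mul_add, Matrix.add_mul]]
    refine aux_conj_psd V _ fun i => ?_
    have h1 : -ev i ≤ |ev i| := neg_le_abs _
    have h2 : |ev i| ≤ ∑ j, |ev j| :=
      Finset.single_le_sum (fun j _ => abs_nonneg (ev j)) (Finset.mem_univ i)
    linarith

/-- For a positive definite `X`, a positive `ε` with `X - ε•1` PSD. -/
lemma aux_posdef_bound {X : Matrix (Fin k) (Fin k) ℂ} (hX : X.PosDef) :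
    ∃ ε : ℝ, 0 < ε ∧ (X - (ε : ℂ) • 1).PosSemidef := by
  rcases isEmpty_or_nonempty (Fin k) with h | h
  · refine ⟨1, one_pos, .of_dotProduct_mulVec_nonneg ?_ fun x => ?_⟩
    · ext i j; exact isEmptyElim i
    · simp [dotProduct, Finset.univ_eq_empty]
  · set ev := hX.isHermitian.eigenvalues
    refine ⟨Finset.univ.inf' Finset.univ_nonempty ev, ?_, ?_⟩
    · rw [Finset.lt_inf'_iff]
      exact fun i _ => hX.eigenvalues_pos i
    · set V := hX.isHermitian.eigenvectorUnitary
      rw [hX.isHermitian.spectral_theorem, Unitary.conjStarAlgAut_apply, aux_smul_one V, aux_conj_sub]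
      rw [show (fun i => (RCLike.ofReal ∘ ev) i
            - ((Finset.univ.inf' Finset.univ_nonempty ev : ℝ) : ℂ))
          = fun i => ((ev i - Finset.univ.inf' Finset.univ_nonempty ev : ℝ) : ℂ) by
        funext i; push_cast; rfl]
      refine aux_conj_psd V _ fun i => ?_
      have := Finset.inf'_le ev (Finset.mem_univ i)
      linarith

lemma aux_conj_add (V : Matrix.unitaryGroup (Fin k) ℂ) (a b : Fin k → ℂ) :
    ((V : Matrix (Fin k) (Fin k) ℂ) * diagonal a * star (V : Matrix (Fin k) (Fin k) ℂ)) +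
      ((V : Matrix (Fin k) (Fin k) ℂ) * diagonal b * star (V : Matrix (Fin k) (Fin k) ℂ)) =
    (V : Matrix (Fin k) (Fin k) ℂ) * diagonal (fun i => a i + b i) *
      star (V : Matrix (Fin k) (Fin k) ℂ) := by
  have : diagonal (fun i => a i + b i) = diagonal a + diagonal b := by
    rw [diagonal_add]
  rw [this, Matrix.mul_add, Matrix.add_mul]

lemma aux_smul_one_psd (t : ℝ) (ht : 0 ≤ t) :
    ((t : ℂ) • (1 : Matrix (Fin k) (Fin k) ℂ)).PosSemidef := by
  have : (t : ℂ) • (1 : Matrix (Fin k) (Fin k) ℂ) = diagonal (fun _ => (t : ℂ)) := by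
    ext i j
    by_cases h : i = j <;> simp [h, diagonal, Matrix.one_apply, Matrix.smul_apply]
  rw [this]
  exact posSemidef_diagonal_iff.mpr fun i => by exact_mod_cast ht

lemma aux_eq_zero_of_mulVec {M : Matrix (Fin k) (Fin k) ℂ} (h : ∀ y, M *ᵥ y = 0) : M = 0 := by
  ext i j
  have := congr_fun (h (Pi.single j 1)) i
  simpa [mulVec_single] using this

/-- If `T` is positive but not strictly positive, and `m = dim ker (T 1) ≥ 1`, then there is
an orthogonal projection `π` of rank `k - m` with `π * T A * π = T A` for every `A`. -/
theorem exists_projection_of_not_strictly_positive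
    {n k : ℕ} (T : Matrix (Fin n) (Fin n) ℂ →ₗ[ℂ] Matrix (Fin k) (Fin k) ℂ)
    (hT : ∀ A : Matrix (Fin n) (Fin n) ℂ, A.PosSemidef → (T A).PosSemidef)
    (hnsp : ¬ (∀ X : Matrix (Fin n) (Fin n) ℂ, X.PosDef → (T X).PosDef))
    (m : ℕ) (hm : m = Module.finrank ℂ (LinearMap.ker (T 1).mulVecLin)) :
    1 ≤ m ∧ ∃ π : Matrix (Fin k) (Fin k) ℂ, π.IsHermitian ∧ π * π = π ∧
      π.rank = k - m ∧ ∀ A : Matrix (Fin n) (Fin n) ℂ, π * T A * π = T A := by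
  classical
  set H : Matrix (Fin k) (Fin k) ℂ := T 1 with hHdef
  have hH : H.PosSemidef := hT 1 Matrix.PosSemidef.one
  have hHh : H.IsHermitian := hH.isHermitian
  -- Part 1 : 1 ≤ m
  have hm1 : 1 ≤ m := by
    by_contra h1
    push_neg at h1
    interval_cases m
    have hkerbot : LinearMap.ker H.mulVecLin = ⊥ :=
      Submodule.finrank_eq_zero.mp hm.symm
    have hHpd : H.PosDef := by
      refine .of_dotProduct_mulVec_pos hHh fun x hx => ?_
      have hle : 0 ≤ star x ⬝ᵥ H *ᵥ x := hH.dotProduct_mulVec_nonneg x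
      refine lt_of_le_of_ne hle fun hc => ?_
      have hx0 : H *ᵥ x = 0 := (hH.dotProduct_mulVec_zero_iff x).mp hc.symm
      have : x ∈ LinearMap.ker H.mulVecLin := by
        simpa [Matrix.mulVecLin_apply] using hx0
      rw [hkerbot, Submodule.mem_bot] at this
      exact hx this
    refine hnsp fun X hX => ?_
    obtain ⟨ε, hε, hPSD⟩ := aux_posdef_bound hX
    refine .of_dotProduct_mulVec_pos (hT X hX.posSemidef).isHermitian fun x hx => ?_
    have hsplit : T X = T (X - (ε : ℂ) • 1) + (ε : ℂ) • H := by
      rw [← _root_.map_smul, ← map_add]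
      congr 1
      module
    have ha : 0 ≤ star x ⬝ᵥ (T (X - (ε : ℂ) • 1)) *ᵥ x := (hT _ hPSD).dotProduct_mulVec_nonneg x
    have hb : 0 < star x ⬝ᵥ H *ᵥ x := hHpd.dotProduct_mulVec_pos hx
    rw [hsplit, add_mulVec, dotProduct_add, smul_mulVec, dotProduct_smul, smul_eq_mul]
    set a := star x ⬝ᵥ (T (X - (ε : ℂ) • 1)) *ᵥ x
    set b := star x ⬝ᵥ H *ᵥ x
    rw [Complex.lt_def] at hb ⊢
    rw [Complex.le_def] at ha
    constructor
    · simp only [Complex.add_re, Complex.mul_re, Complex.ofReal_re, Complex.ofReal_im,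
        Complex.zero_re, Complex.zero_im] at *
      nlinarith [hb.1, hb.2, ha.1]
    · simp only [Complex.add_im, Complex.mul_im, Complex.ofReal_re, Complex.ofReal_im,
        Complex.zero_im, Complex.zero_re] at *
      rw [← ha.2, ← hb.2]; ring
  refine ⟨hm1, ?_⟩
  -- the projection
  set V := hHh.eigenvectorUnitary with hVdef
  set ev := hHh.eigenvalues with hevdef
  set g : Fin k → ℂ := fun i => if ev i = 0 then 0 else 1 with hgdef
  set π : Matrix (Fin k) (Fin k) ℂ :=
    (V : Matrix (Fin k) (Fin k) ℂ) * diagonal g * star (V : Matrix (Fin k) (Fin k) ℂ) with hπdef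
  set Q : Matrix (Fin k) (Fin k) ℂ :=
    (V : Matrix (Fin k) (Fin k) ℂ) * diagonal (fun i => 1 - g i) *
      star (V : Matrix (Fin k) (Fin k) ℂ) with hQdef
  -- basic facts
  have hπQ : π + Q = 1 := by
    rw [hπdef, hQdef, aux_conj_add]
    have : (fun i => g i + (1 - g i)) = fun _ : Fin k => (1 : ℂ) := by
      funext i; ring
    rw [this, diagonal_one, mul_one]
    exact (Matrix.mem_unitaryGroup_iff).mp V.2
  have hgstar : star g = g := by
    funext i
    simp only [Pi.star_apply, hgdef]
    by_cases h : ev i = 0 <;> simp [h]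
  have hπherm : π.IsHermitian := by
    rw [Matrix.IsHermitian, hπdef, ← star_eq_conjTranspose, StarMul.star_mul, StarMul.star_mul, star_star,
      Matrix.mul_assoc,
      show star (diagonal g) = diagonal g from by
        rw [star_eq_conjTranspose, diagonal_conjTranspose, hgstar]]
  have hπidem : π * π = π := by
    rw [hπdef, aux_conj_mul,
      show (fun i => g i * g i) = g from funext fun i => by
        by_cases h : ev i = 0 <;> simp [hgdef, h]]
  -- H * Q = 0
  have hHQ : H * Q = 0 := by
    conv_lhs => rw [hHh.spectral_theorem, Unitary.conjStarAlgAut_apply]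
    rw [hQdef, ← hVdef, aux_conj_mul]
    have : (fun i => (RCLike.ofReal ∘ ev) i * (1 - g i)) = fun _ : Fin k => (0 : ℂ) := by
      funext i
      simp only [Function.comp_apply, hgdef]
      by_cases h : ev i = 0 <;> simp [h]
    rw [this, show diagonal (fun _ : Fin k => (0:ℂ)) = 0 from diagonal_zero,
      Matrix.mul_zero, Matrix.zero_mul]
  -- the key property for PSD inputs
  have key : ∀ A : Matrix (Fin n) (Fin n) ℂ, A.PosSemidef → π * T A * π = T A := by
    intro A hA
    have hM : (T A).PosSemidef := hT A hA
    set M : Matrix (Fin k) (Fin k) ℂ := T A with hMdef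
    obtain ⟨t, ht0, htub, -⟩ := aux_herm_bound hA.isHermitian
    have hTub : ((t : ℂ) • H - M).PosSemidef := by
      have h := hT _ htub
      rwa [map_sub, _root_.map_smul] at h
    have hker : ∀ y, H *ᵥ y = 0 → M *ᵥ y = 0 := by
      intro y hy
      have h1 : 0 ≤ star y ⬝ᵥ ((t : ℂ) • H - M) *ᵥ y := hTub.dotProduct_mulVec_nonneg y
      have h2 : 0 ≤ star y ⬝ᵥ M *ᵥ y := hM.dotProduct_mulVec_nonneg y
      have h3 : star y ⬝ᵥ ((t : ℂ) • H - M) *ᵥ y = -(star y ⬝ᵥ M *ᵥ y) := by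
        rw [sub_mulVec, dotProduct_sub, smul_mulVec, dotProduct_smul, hy]
        simp
      rw [h3] at h1
      exact (hM.dotProduct_mulVec_zero_iff y).mp (le_antisymm (by simpa using h1) h2)
    have hMQ : M * Q = 0 := by
      refine aux_eq_zero_of_mulVec fun y => ?_
      have h0 : H *ᵥ (Q *ᵥ y) = 0 := by
        rw [mulVec_mulVec, hHQ, zero_mulVec]
      have := hker _ h0
      rwa [mulVec_mulVec] at this
    have hMπ : M * π = M := by
      have hπeq : π = 1 - Q := by rw [← hπQ, add_sub_cancel_right]
      rw [hπeq, Matrix.mul_sub, hMQ, Matrix.mul_one, sub_zero]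
    have hπM : π * M = M := by
      have : π * M = (M * π)ᴴ := by
        rw [conjTranspose_mul, hπherm, hM.isHermitian]
      rw [this, hMπ, hM.isHermitian]
    rw [hπM, hMπ]
  -- extend to Hermitian inputs
  have keyH : ∀ B : Matrix (Fin n) (Fin n) ℂ, B.IsHermitian → π * T B * π = T B := by
    intro B hB
    obtain ⟨t, ht0, -, hplus⟩ := aux_herm_bound hB
    have h1 := key _ hplus
    have h2 := key _ (aux_smul_one_psd t ht0)
    have hsplit : T B = T (B + (t : ℂ) • 1) - T ((t : ℂ) • 1) := by
      rw [← map_sub]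
      congr 1
      exact (add_sub_cancel_right B _).symm
    rw [hsplit, Matrix.mul_sub, Matrix.sub_mul, h1, h2]
  -- extend to all inputs
  have keyAll : ∀ A : Matrix (Fin n) (Fin n) ℂ, π * T A * π = T A := by
    intro A
    obtain ⟨B, hBdef⟩ : ∃ B : Matrix (Fin n) (Fin n) ℂ, B = ((2 : ℂ)⁻¹) • (A + Aᴴ) := ⟨_, rfl⟩
    obtain ⟨C, hCdef⟩ : ∃ C : Matrix (Fin n) (Fin n) ℂ, C = (-(Complex.I / 2)) • (A - Aᴴ) :=
      ⟨_, rfl⟩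
    have hB : B.IsHermitian := by
      rw [Matrix.IsHermitian, hBdef, conjTranspose_smul, conjTranspose_add,
        conjTranspose_conjTranspose]
      rw [show star ((2 : ℂ)⁻¹) = (2 : ℂ)⁻¹ by norm_num [Complex.ext_iff]]
      rw [add_comm]
    have hC : C.IsHermitian := by
      rw [Matrix.IsHermitian, hCdef, conjTranspose_smul, conjTranspose_sub,
        conjTranspose_conjTranspose]
      rw [show star (-(Complex.I / 2)) = Complex.I / 2 by norm_num [Complex.ext_iff],
        neg_smul, ← smul_neg, neg_sub]
    have hdecomp : A = B + Complex.I • C := by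
      rw [hBdef, hCdef, smul_smul]
      rw [show Complex.I * -(Complex.I / 2) = (2 : ℂ)⁻¹ by
        rw [mul_neg, ← mul_div_assoc, Complex.I_mul_I]; norm_num]
      module
    conv_lhs => rw [hdecomp]
    conv_rhs => rw [hdecomp]
    rw [map_add, _root_.map_smul, Matrix.mul_add, Matrix.add_mul, mul_smul_comm, smul_mul_assoc,
      keyH B hB, keyH C hC]
  -- rank computation
  have hdetV : IsUnit (V : Matrix (Fin k) (Fin k) ℂ).det :=
    IsUnit.of_mul_eq_one _ (by rw [← det_mul, Unitary.coe_mul_star_self, det_one])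
  have hdetVs : IsUnit (star (V : Matrix (Fin k) (Fin k) ℂ)).det :=
    IsUnit.of_mul_eq_one _ (by rw [← det_mul, Unitary.coe_star_mul_self, det_one])
  have hrankπ : π.rank = H.rank := by
    rw [hπdef, rank_mul_eq_left_of_isUnit_det _ _ hdetVs,
      rank_mul_eq_right_of_isUnit_det _ _ hdetV, rank_diagonal,
      hHh.rank_eq_card_non_zero_eigs]
    refine Fintype.card_congr (Equiv.subtypeEquivRight fun i => ?_)
    simp only [hgdef, ← hevdef]
    by_cases h : ev i = 0 <;> simp [h]
  have hmk : H.rank + m = k := by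
    have h1 := LinearMap.finrank_range_add_finrank_ker H.mulVecLin
    rw [Module.finrank_fin_fun] at h1
    rw [hm]
    exact h1
  exact ⟨π, hπherm, hπidem, by omega, keyAll⟩
end

section
/- Let T : ℂ^{n×n} → ℂ^{2×2} be a positive trace-preserving linear map which is not strictly positive. Then there exists a unit vector ψ ∈ ℂ² such that T(A) = tr(A) |ψ⟩⟨ψ| for all A ∈ ℂ^{n×n}. -/
open Matrix
open scoped ComplexOrder

/-- Quadratic form bound: `|x* H x| ≤ (∑ |H i j|) * (∑ |x k|²)`. -/
lemma quad_bound {m : Type*} [Fintype m] (H : Matrix m m ℂ) (x : m → ℂ) :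
    ‖star x ⬝ᵥ H *ᵥ x‖ ≤
      (∑ i, ∑ j, ‖H i j‖) * (∑ k, Complex.normSq (x k)) := by
  classical
  set S : ℝ := ∑ k, Complex.normSq (x k) with hS
  have hxij : ∀ i j, ‖x i‖ * ‖x j‖ ≤ S := by
    intro i j
    have h1 : Complex.normSq (x i) ≤ S :=
      Finset.single_le_sum (fun k _ => Complex.normSq_nonneg (x k)) (Finset.mem_univ i)
    have h2 : Complex.normSq (x j) ≤ S :=
      Finset.single_le_sum (fun k _ => Complex.normSq_nonneg (x k)) (Finset.mem_univ j)
    rw [Complex.normSq_eq_norm_sq] at h1 h2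
    nlinarith [norm_nonneg (x i), norm_nonneg (x j),
      sq_nonneg (‖x i‖ - ‖x j‖)]
  have hexp : star x ⬝ᵥ H *ᵥ x = ∑ i, ∑ j, star (x i) * (H i j * x j) := by
    simp [dotProduct, mulVec, Finset.mul_sum]
  rw [hexp]
  calc ‖∑ i, ∑ j, star (x i) * (H i j * x j)‖
      ≤ ∑ i, ∑ j, ‖star (x i) * (H i j * x j)‖ := by
        refine (norm_sum_le _ _).trans ?_
        exact Finset.sum_le_sum fun i _ => norm_sum_le _ _
    _ ≤ ∑ i, ∑ j, ‖H i j‖ * S := by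
        refine Finset.sum_le_sum fun i _ => Finset.sum_le_sum fun j _ => ?_
        rw [norm_mul, norm_mul, RCLike.star_def, Complex.norm_conj]
        calc ‖x i‖ * (‖H i j‖ * ‖x j‖)
            = ‖H i j‖ * (‖x i‖ * ‖x j‖) := by ring
          _ ≤ ‖H i j‖ * S :=
              mul_le_mul_of_nonneg_left (hxij i j) (norm_nonneg _)
    _ = (∑ i, ∑ j, ‖H i j‖) * S := by rw [Finset.sum_mul]; simp [Finset.sum_mul]

/-- A Hermitian matrix plus a big enough multiple of the identity is PSD. -/
lemma herm_add_smul_one_psd {m : Type*} [Fintype m] [DecidableEq m]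
    {H : Matrix m m ℂ} (hH : H.IsHermitian) :
    ((((∑ i, ∑ j, ‖H i j‖) : ℝ) : ℂ) • 1 + H).PosSemidef := by
  set c : ℝ := ∑ i, ∑ j, ‖H i j‖ with hc
  refine PosSemidef.of_dotProduct_mulVec_nonneg ?_ ?_
  · show _ᴴ = _
    rw [conjTranspose_add, conjTranspose_smul, conjTranspose_one, hH.eq]
    simp [Complex.star_def, Complex.conj_ofReal]
  · intro x
    have hxx : star x ⬝ᵥ x = (((∑ k, Complex.normSq (x k)) : ℝ) : ℂ) := by
      push_cast
      simp [dotProduct, Complex.normSq_eq_conj_mul_self]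
    set S : ℝ := ∑ k, Complex.normSq (x k) with hSdef
    set z : ℂ := star x ⬝ᵥ H *ᵥ x with hz
    have hreal : (starRingEnd ℂ) z = z := by
      rw [hz]
      calc (starRingEnd ℂ) (star x ⬝ᵥ H *ᵥ x)
          = star (star x ⬝ᵥ H *ᵥ x) := rfl
        _ = star (H *ᵥ x) ⬝ᵥ star (star x) := by rw [← star_dotProduct_star, star_star]
        _ = (star x ᵥ* Hᴴ) ⬝ᵥ x := by rw [star_star, star_mulVec]
        _ = star x ⬝ᵥ Hᴴ *ᵥ x := by rw [dotProduct_mulVec]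
        _ = z := by rw [hH.eq, hz]
    have him : z.im = 0 := by
      have h := congrArg Complex.im hreal
      rw [Complex.conj_im] at h
      linarith
    have habs : ‖z‖ ≤ c * S := quad_bound H x
    have hre : -(c * S) ≤ z.re := by
      have h1 : |z.re| ≤ ‖z‖ := Complex.abs_re_le_norm z
      have h2 := neg_abs_le z.re
      linarith
    have hgoal : star x ⬝ᵥ (((c : ℂ) • 1 + H) *ᵥ x) = (c : ℂ) * (S : ℂ) + z := by
      rw [add_mulVec, dotProduct_add, smul_mulVec, one_mulVec, dotProduct_smul,
        smul_eq_mul, hxx]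
    rw [hgoal, Complex.le_def]
    constructor
    · simp only [Complex.add_re, Complex.mul_re, Complex.ofReal_re, Complex.ofReal_im,
        Complex.zero_re]
      nlinarith [hre]
    · simp [him]

/-- Any complex matrix decomposes via PSD matrices. -/
lemma decomp {m : Type*} [Fintype m] [DecidableEq m] (A : Matrix m m ℂ) :
    ∃ (P Q : Matrix m m ℂ) (c d : ℝ), P.PosSemidef ∧ Q.PosSemidef ∧
      A = P - (c:ℂ) • 1 + Complex.I • Q - (Complex.I * d) • 1 ∧
      Aᴴ = P - (c:ℂ) • 1 - Complex.I • Q + (Complex.I * d) • 1 := by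
  set Hm : Matrix m m ℂ := ((1:ℂ)/2) • (A + Aᴴ) with hHm
  set K : Matrix m m ℂ := (-Complex.I * ((1:ℂ)/2)) • (A - Aᴴ) with hK
  have hHmH : Hm.IsHermitian := by
    show _ᴴ = _
    rw [hHm, conjTranspose_smul, conjTranspose_add, conjTranspose_conjTranspose]
    rw [show star ((1:ℂ)/2) = (1:ℂ)/2 by norm_num]
    rw [add_comm]
  have hKH : K.IsHermitian := by
    show _ᴴ = _
    rw [hK, conjTranspose_smul, conjTranspose_sub, conjTranspose_conjTranspose]
    rw [show star (-Complex.I * ((1:ℂ)/2)) = Complex.I * ((1:ℂ)/2) by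
      simp [Complex.star_def]]
    module
  have hIK : Complex.I • K = ((1:ℂ)/2) • (A - Aᴴ) := by
    rw [hK, smul_smul, show Complex.I * (-Complex.I * ((1:ℂ)/2)) = (1:ℂ)/2 by
      rw [show Complex.I * (-Complex.I * ((1:ℂ)/2)) = -(Complex.I*Complex.I) * ((1:ℂ)/2) by ring,
        Complex.I_mul_I]; norm_num]
  refine ⟨(((∑ i, ∑ j, ‖Hm i j‖) : ℝ) : ℂ) • 1 + Hm,
    (((∑ i, ∑ j, ‖K i j‖) : ℝ) : ℂ) • 1 + K,
    (∑ i, ∑ j, ‖Hm i j‖), (∑ i, ∑ j, ‖K i j‖),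
    herm_add_smul_one_psd hHmH, herm_add_smul_one_psd hKH, ?_, ?_⟩
  · have : A = Hm + Complex.I • K := by
      rw [hIK, hHm]; module
    rw [smul_add, show (Complex.I * ((∑ i, ∑ j, ‖K i j‖ : ℝ) : ℂ)) • (1 : Matrix m m ℂ)
      = Complex.I • ((((∑ i, ∑ j, ‖K i j‖) : ℝ) : ℂ) • 1) by rw [smul_smul]]
    rw [this]; module
  · have : Aᴴ = Hm - Complex.I • K := by
      rw [hIK, hHm]; module
    rw [smul_add, show (Complex.I * ((∑ i, ∑ j, ‖K i j‖ : ℝ) : ℂ)) • (1 : Matrix m m ℂ)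
      = Complex.I • ((((∑ i, ∑ j, ‖K i j‖) : ℝ) : ℂ) • 1) by rw [smul_smul]]
    rw [this]; module

lemma key2 (v : Fin 2 → ℂ) (hv : v ≠ 0) :
    ∃ ψ : Fin 2 → ℂ, star ψ ⬝ᵥ ψ = 1 ∧ ∀ M : Matrix (Fin 2) (Fin 2) ℂ,
      M *ᵥ v = 0 → Mᴴ *ᵥ v = 0 → M = M.trace • Matrix.vecMulVec ψ (star ψ) := by
  set a : ℂ := v 0 with ha
  set b : ℂ := v 1 with hb
  have hs : 0 < Complex.normSq a + Complex.normSq b := by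
    by_contra h
    push_neg at h
    have h0 : Complex.normSq a = 0 ∧ Complex.normSq b = 0 := by
      constructor <;> nlinarith [Complex.normSq_nonneg a, Complex.normSq_nonneg b]
    exact hv (funext fun i => by
      fin_cases i
      · simpa using Complex.normSq_eq_zero.mp h0.1
      · simpa using Complex.normSq_eq_zero.mp h0.2)
  set s : ℝ := Complex.normSq a + Complex.normSq b with hsdef
  set r : ℝ := Real.sqrt s with hrdef
  have hr0 : 0 < r := Real.sqrt_pos.mpr hs
  have hrC : (r : ℂ) ≠ 0 := by exact_mod_cast hr0.ne'
  have hrr : (r : ℂ) * r = (s : ℂ) := by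
    norm_cast
    exact Real.mul_self_sqrt hs.le
  have hsC : (s : ℂ) = a * (starRingEnd ℂ) a + b * (starRingEnd ℂ) b := by
    rw [hsdef]
    push_cast
    rw [Complex.mul_conj, Complex.mul_conj]
  have hrr' : (r : ℂ) * r = a * (starRingEnd ℂ) a + b * (starRingEnd ℂ) b := hrr.trans hsC
  refine ⟨![-((starRingEnd ℂ) b) / r, (starRingEnd ℂ) a / r], ?_, ?_⟩
  · simp only [dotProduct, Fin.sum_univ_two, Pi.star_apply, Matrix.cons_val_zero,
      Matrix.cons_val_one, Matrix.head_cons, RCLike.star_def, map_div₀, map_neg,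
      Complex.conj_conj, Complex.conj_ofReal]
    field_simp
    linear_combination -hrr'
  · intro M hMv hMh
    have e1 : M 0 0 * a + M 0 1 * b = 0 := by
      have := congrFun hMv 0
      simpa [mulVec, dotProduct, Fin.sum_univ_two] using this
    have e2 : M 1 0 * a + M 1 1 * b = 0 := by
      have := congrFun hMv 1
      simpa [mulVec, dotProduct, Fin.sum_univ_two] using this
    have f1 : (starRingEnd ℂ) (M 0 0) * a + (starRingEnd ℂ) (M 1 0) * b = 0 := by
      have := congrFun hMh 0
      simpa [mulVec, dotProduct, Fin.sum_univ_two, conjTranspose_apply] using this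
    have f2 : (starRingEnd ℂ) (M 0 1) * a + (starRingEnd ℂ) (M 1 1) * b = 0 := by
      have := congrFun hMh 1
      simpa [mulVec, dotProduct, Fin.sum_univ_two, conjTranspose_apply] using this
    have g1 : M 0 0 * (starRingEnd ℂ) a + M 1 0 * (starRingEnd ℂ) b = 0 := by
      have := congrArg (starRingEnd ℂ) f1
      simpa [map_add, _root_.map_mul, Complex.conj_conj] using this
    have g2 : M 0 1 * (starRingEnd ℂ) a + M 1 1 * (starRingEnd ℂ) b = 0 := by
      have := congrArg (starRingEnd ℂ) f2
      simpa [map_add, _root_.map_mul, Complex.conj_conj] using this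
    have htr : M.trace = M 0 0 + M 1 1 := Matrix.trace_fin_two M
    ext i j
    fin_cases i <;> fin_cases j <;>
      simp only [Matrix.smul_apply, Matrix.vecMulVec_apply, Pi.star_apply, htr,
        Matrix.cons_val_zero, Matrix.cons_val_one, Matrix.head_cons, RCLike.star_def,
        map_div₀, map_neg, Complex.conj_conj, Complex.conj_ofReal, smul_eq_mul,
        Fin.isValue, Fin.zero_eta, Fin.mk_one]
    · field_simp
      linear_combination (starRingEnd ℂ a) * e1 - b * g2 + M 0 0 * hrr'
    · field_simp
      linear_combination a * g2 + (starRingEnd ℂ b) * e1 + M 0 1 * hrr'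
    · field_simp
      linear_combination (starRingEnd ℂ a) * e2 + b * g1 + M 1 0 * hrr'
    · field_simp
      linear_combination -(starRingEnd ℂ a) * e1 + b * g2 + M 1 1 * hrr'

/-- A positive trace-preserving map into `ℂ^{2×2}` which is not strictly positive is the
trace projection onto a pure state: `T A = tr(A) • |ψ⟩⟨ψ|` for some unit vector `ψ`. -/
theorem qubit_not_strictly_positive_is_trace_projection
    {n : ℕ} (T : Matrix (Fin n) (Fin n) ℂ →ₗ[ℂ] Matrix (Fin 2) (Fin 2) ℂ)
    (hT : ∀ A : Matrix (Fin n) (Fin n) ℂ, A.PosSemidef → (T A).PosSemidef)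
    (htr : ∀ A : Matrix (Fin n) (Fin n) ℂ, (T A).trace = A.trace)
    (hnsp : ¬ (∀ X : Matrix (Fin n) (Fin n) ℂ, X.PosDef → (T X).PosDef)) :
    ∃ ψ : Fin 2 → ℂ, star ψ ⬝ᵥ ψ = 1 ∧
      ∀ A : Matrix (Fin n) (Fin n) ℂ, T A = A.trace • Matrix.vecMulVec ψ (star ψ) := by
  push_neg at hnsp
  obtain ⟨X, hX, hTX⟩ := hnsp
  have hTXps : (T X).PosSemidef := hT X hX.posSemidef
  have h2 : ¬ ∀ x : Fin 2 → ℂ, x ≠ 0 → 0 < star x ⬝ᵥ (T X) *ᵥ x :=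
    fun h => hTX (PosDef.of_dotProduct_mulVec_pos hTXps.isHermitian fun x hx => h x hx)
  push_neg at h2
  obtain ⟨v, hv0, hvle⟩ := h2
  have hq0 : star v ⬝ᵥ (T X) *ᵥ v = 0 := ((hTXps.dotProduct_mulVec_nonneg v).lt_or_eq.resolve_left hvle).symm
  -- the kernel property for PSD matrices
  have hkerPSD : ∀ B : Matrix (Fin n) (Fin n) ℂ, B.PosSemidef → (T B) *ᵥ v = 0 := by
    intro B hB
    set C : Matrix (Fin n) (Fin n) ℂ := (open scoped MatrixOrder in CFC.sqrt X) with hCdef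
    have hC : C.PosSemidef :=
      open scoped MatrixOrder in Matrix.nonneg_iff_posSemidef.mp (CFC.sqrt_nonneg X)
    have hCX : C * C = X :=
      open scoped MatrixOrder in CFC.sqrt_mul_sqrt_self X (Matrix.nonneg_iff_posSemidef.mpr hX.posSemidef)
    have hdet : C.det * C.det = X.det := by rw [← det_mul, hCX]
    have hXdet : X.det ≠ 0 := hX.det_pos.ne'
    have hCdet0 : C.det ≠ 0 := fun h => hXdet (by rw [← hdet, h, mul_zero])
    have hCu : IsUnit C.det := isUnit_iff_ne_zero.mpr hCdet0
    have hCh : Cᴴ = C := hC.isHermitian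
    set M : Matrix (Fin n) (Fin n) ℂ := C⁻¹ * B * C⁻¹ᴴ with hMdef
    have hM : M.PosSemidef := hB.mul_mul_conjTranspose_same C⁻¹
    have hMH : (-M).IsHermitian := hM.isHermitian.neg
    set c : ℝ := ∑ i, ∑ j, ‖(-M) i j‖ with hc
    have hN : (((c : ℝ) : ℂ) • 1 + -M).PosSemidef := herm_add_smul_one_psd hMH
    have hcong : (C * (((c : ℝ) : ℂ) • 1 + -M) * Cᴴ).PosSemidef :=
      hN.mul_mul_conjTranspose_same C
    have hCMC : C * M * C = B := by
      rw [hMdef, conjTranspose_nonsing_inv, hCh]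
      calc C * (C⁻¹ * B * C⁻¹) * C = C * C⁻¹ * B * (C⁻¹ * C) := by
            simp only [Matrix.mul_assoc]
        _ = B := by rw [mul_nonsing_inv _ hCu, nonsing_inv_mul _ hCu, one_mul, mul_one]
    have hEq : C * (((c : ℝ) : ℂ) • 1 + -M) * Cᴴ = (c : ℂ) • X - B := by
      rw [hCh, mul_add, add_mul, Matrix.mul_smul, Matrix.smul_mul, mul_one, hCX,
        mul_neg, neg_mul, hCMC]
      abel
    rw [hEq] at hcong
    have himg : (T ((c : ℂ) • X - B)).PosSemidef := hT _ hcong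
    have hq : star v ⬝ᵥ (T ((c : ℂ) • X - B)) *ᵥ v =
        (c : ℂ) * (star v ⬝ᵥ (T X) *ᵥ v) - star v ⬝ᵥ (T B) *ᵥ v := by
      rw [map_sub, _root_.map_smul, sub_mulVec, smul_mulVec, dotProduct_sub, dotProduct_smul,
        smul_eq_mul]
    have hle : 0 ≤ (c : ℂ) * (star v ⬝ᵥ (T X) *ᵥ v) - star v ⬝ᵥ (T B) *ᵥ v := by
      rw [← hq]; exact himg.dotProduct_mulVec_nonneg v
    rw [hq0, mul_zero, zero_sub] at hle
    have hBq : star v ⬝ᵥ (T B) *ᵥ v = 0 :=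
      le_antisymm (by simpa using neg_nonneg.mp (by simpa using hle)) ((hT B hB).dotProduct_mulVec_nonneg v)
    exact ((hT B hB).dotProduct_mulVec_zero_iff v).mp hBq
  -- kernel for all matrices
  have hkerAll : ∀ A : Matrix (Fin n) (Fin n) ℂ, (T A) *ᵥ v = 0 := by
    intro A
    obtain ⟨P, Q, c, d, hP, hQ, hA, -⟩ := decomp A
    have h1 : (T 1) *ᵥ v = 0 := hkerPSD 1 Matrix.PosSemidef.one
    rw [hA]
    rw [map_sub, map_add, map_sub, _root_.map_smul, _root_.map_smul, _root_.map_smul]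
    rw [sub_mulVec, add_mulVec, sub_mulVec, smul_mulVec, smul_mulVec,
      smul_mulVec, hkerPSD P hP, hkerPSD Q hQ, h1]
    simp
  -- conjugation property
  have hconj : ∀ A : Matrix (Fin n) (Fin n) ℂ, (T A)ᴴ = T Aᴴ := by
    intro A
    obtain ⟨P, Q, c, d, hP, hQ, hA, hAH⟩ := decomp A
    have hTP : (T P)ᴴ = T P := (hT P hP).isHermitian
    have hTQ : (T Q)ᴴ = T Q := (hT Q hQ).isHermitian
    have hT1 : (T 1)ᴴ = T 1 := (hT 1 Matrix.PosSemidef.one).isHermitian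
    rw [hAH, hA]
    rw [map_sub, map_add, map_sub, _root_.map_smul, _root_.map_smul, _root_.map_smul]
    rw [map_add, map_sub, map_sub, _root_.map_smul, _root_.map_smul, _root_.map_smul]
    rw [conjTranspose_sub, conjTranspose_add, conjTranspose_sub, conjTranspose_smul,
      conjTranspose_smul, conjTranspose_smul, hTP, hTQ, hT1]
    rw [show star ((c : ℝ) : ℂ) = ((c : ℝ) : ℂ) by simp [Complex.star_def, Complex.conj_ofReal]]
    rw [show star (Complex.I) = -Complex.I from Complex.star_def ▸ Complex.conj_I]
    rw [show star (Complex.I * (d : ℂ)) = -(Complex.I * (d : ℂ)) by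
      simp [Complex.star_def, Complex.conj_ofReal]]
    module
  obtain ⟨ψ, hψ1, hψ2⟩ := key2 v hv0
  refine ⟨ψ, hψ1, fun A => ?_⟩
  have hMh : (T A)ᴴ *ᵥ v = 0 := by rw [hconj A]; exact hkerAll Aᴴ
  have := hψ2 (T A) (hkerAll A) hMh
  rwa [htr A] at this
end

section
/- Let (T_t)_{t≥0} be a one-parameter semigroup of positive trace-preserving linear maps on ℂ^{n×n} which is continuous in t with T₀ = id. Then T_t is strictly positive for every t ≥ 0. -/
open Matrix
open scoped ComplexOrder

/-- A positive semidefinite matrix with nonzero determinant is positive definite. -/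
lemma aux_posDef_of_posSemidef_det_ne_zero {n : ℕ} {X : Matrix (Fin n) (Fin n) ℂ}
    (hX : X.PosSemidef) (hdet : X.det ≠ 0) : X.PosDef := by
  exact hX.posDef_iff_det_ne_zero.mpr hdet

/-- A positive real multiple of a positive definite matrix is positive definite. -/
lemma aux_smul_posDef {n : ℕ} {M : Matrix (Fin n) (Fin n) ℂ} (hM : M.PosDef) {ε : ℝ}
    (hε : 0 < ε) : ((ε : ℂ) • M).PosDef := by
  refine PosDef.of_dotProduct_mulVec_pos ?_ fun x hx => ?_
  · show ((ε : ℂ) • M)ᴴ = (ε : ℂ) • M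
    rw [conjTranspose_smul, hM.isHermitian.eq, Complex.star_def, Complex.conj_ofReal]
  · rw [smul_mulVec, dotProduct_smul, smul_eq_mul]
    exact mul_pos (Complex.zero_lt_real.mpr hε) (hM.dotProduct_mulVec_pos hx)

/-- A positive definite matrix dominates a positive multiple of the identity. -/
lemma aux_exists_eps {n : ℕ} [Nonempty (Fin n)] {X : Matrix (Fin n) (Fin n) ℂ}
    (hX : X.PosDef) : ∃ ε : ℝ, 0 < ε ∧ (X - (ε : ℂ) • 1).PosSemidef := by
  have hH := hX.isHermitian
  obtain ⟨i₀, -, hi₀⟩ := Finset.exists_min_image Finset.univ hH.eigenvalues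
    ⟨Classical.arbitrary _, Finset.mem_univ _⟩
  refine ⟨hH.eigenvalues i₀, hX.eigenvalues_pos i₀, ?_⟩
  set U : Matrix (Fin n) (Fin n) ℂ := ↑hH.eigenvectorUnitary with hUdef
  have hU : U * star U = 1 := Matrix.mem_unitaryGroup_iff.mp hH.eigenvectorUnitary.2
  have hst := hH.spectral_theorem
  rw [Unitary.conjStarAlgAut_apply, ← hUdef] at hst
  have hsm : ((hH.eigenvalues i₀ : ℝ) : ℂ) • (1 : Matrix (Fin n) (Fin n) ℂ)
      = U * (((hH.eigenvalues i₀ : ℝ) : ℂ) • 1) * star U := by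
    rw [Matrix.mul_smul, mul_one, Matrix.smul_mul, hU]
  nth_rewrite 1 [hst]
  rw [hsm, ← sub_mul, ← mul_sub]
  have hpsd : (diagonal (RCLike.ofReal ∘ hH.eigenvalues : Fin n → ℂ)
      - ((hH.eigenvalues i₀ : ℝ) : ℂ) • 1).PosSemidef := by
    rw [smul_one_eq_diagonal, diagonal_sub, posSemidef_diagonal_iff]
    intro i
    rw [sub_nonneg]
    have h := hi₀ i (Finset.mem_univ i)
    show ((hH.eigenvalues i₀ : ℝ) : ℂ) ≤ ((hH.eigenvalues i : ℝ) : ℂ)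
    exact_mod_cast h
  simpa [Matrix.star_eq_conjTranspose] using hpsd.mul_mul_conjTranspose_same U

/-- A positive linear map sending `1` to a positive definite matrix is strictly positive. -/
lemma aux_strict {n : ℕ} [Nonempty (Fin n)]
    (L : Matrix (Fin n) (Fin n) ℂ →ₗ[ℂ] Matrix (Fin n) (Fin n) ℂ)
    (hpos : ∀ A : Matrix (Fin n) (Fin n) ℂ, A.PosSemidef → (L A).PosSemidef)
    (h1 : (L 1).PosDef) {X : Matrix (Fin n) (Fin n) ℂ} (hX : X.PosDef) : (L X).PosDef := by
  obtain ⟨ε, hε, hsub⟩ := aux_exists_eps hX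
  have hLX : L X = L (X - (ε : ℂ) • 1) + (ε : ℂ) • L 1 := by
    rw [← _root_.map_smul, ← map_add]
    congr 1
    abel
  rw [hLX]
  exact Matrix.PosDef.posSemidef_add (hpos _ hsub) (aux_smul_posDef h1 hε)

/-- Every one-parameter semigroup `(T_t)_{t ≥ 0}` of positive trace-preserving linear maps on
`ℂ^{n×n}`, continuous in `t` with `T 0 = id`, consists of strictly positive maps. -/
theorem semigroup_strictly_positive
    {n : ℕ} (T : ℝ → (Matrix (Fin n) (Fin n) ℂ →ₗ[ℂ] Matrix (Fin n) (Fin n) ℂ))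
    (hpos : ∀ t : ℝ, 0 ≤ t → ∀ A : Matrix (Fin n) (Fin n) ℂ, A.PosSemidef → ((T t) A).PosSemidef)
    (htr : ∀ t : ℝ, 0 ≤ t → ∀ A : Matrix (Fin n) (Fin n) ℂ, ((T t) A).trace = A.trace)
    (hsg : ∀ s t : ℝ, 0 ≤ s → 0 ≤ t → T (t + s) = (T t).comp (T s))
    (h0 : T 0 = LinearMap.id)
    (hcont : ∀ A : Matrix (Fin n) (Fin n) ℂ,
      ContinuousOn (fun t : ℝ => (T t) A) (Set.Ici (0 : ℝ))) :
    ∀ t : ℝ, 0 ≤ t → ∀ X : Matrix (Fin n) (Fin n) ℂ, X.PosDef → ((T t) X).PosDef := by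
  rcases Nat.eq_zero_or_pos n with hn | hn
  · subst hn
    intro t ht X hX
    exact ⟨Subsingleton.elim _ _, fun x hx => absurd (Subsingleton.elim x 0) hx⟩
  have : Nonempty (Fin n) := ⟨⟨0, hn⟩⟩
  -- continuity of det (T t 1) on [0, ∞), nonzero at t = 0
  have hdetcont : ContinuousOn (fun t : ℝ => ((T t) 1).det) (Set.Ici 0) :=
    Continuous.comp_continuousOn (continuous_id.matrix_det) (hcont 1)
  have hne : {s : ℝ | ((T s) 1).det ≠ 0} ∈ nhdsWithin (0 : ℝ) (Set.Ici 0) := by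
    have hcwa := hdetcont 0 Set.self_mem_Ici
    exact hcwa.eventually_ne (show ((T 0) 1).det ≠ 0 by rw [h0]; simp)
  obtain ⟨δ, hδpos, hδ⟩ := Metric.mem_nhdsWithin_iff.mp hne
  -- small time strict positivity
  have hsmall : ∀ s : ℝ, 0 ≤ s → s < δ → ∀ X : Matrix (Fin n) (Fin n) ℂ,
      X.PosDef → ((T s) X).PosDef := by
    intro s hs hsδ X hX
    have hpsd1 : ((T s) 1).PosSemidef := hpos s hs 1 Matrix.PosDef.one.posSemidef
    have hdne : ((T s) 1).det ≠ 0 :=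
      hδ ⟨by simpa [Real.dist_eq, abs_of_nonneg hs] using hsδ, hs⟩
    exact aux_strict (T s) (hpos s hs) (aux_posDef_of_posSemidef_det_ne_zero hpsd1 hdne) hX
  -- iterate: T (m * s) is strictly positive for s small
  have hiter : ∀ m : ℕ, ∀ s : ℝ, 0 ≤ s → s < δ → ∀ X : Matrix (Fin n) (Fin n) ℂ,
      X.PosDef → ((T (m * s)) X).PosDef := by
    intro m
    induction m with
    | zero => intro s hs hsδ X hX; simpa [h0] using hX
    | succ m ih =>
      intro s hs hsδ X hX
      have hms : (0 : ℝ) ≤ m * s := mul_nonneg (Nat.cast_nonneg m) hs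
      have hcomp : T ((m + 1 : ℕ) * s) = (T (m * s)).comp (T s) := by
        have h1 : ((m + 1 : ℕ) : ℝ) * s = m * s + s := by push_cast; ring
        rw [h1]
        exact hsg s (m * s) hs hms
      rw [hcomp]
      exact ih s hs hsδ _ (hsmall s hs hsδ X hX)
  -- general t : split into small pieces
  intro t ht X hX
  set m : ℕ := ⌊t / δ⌋₊ + 1 with hm
  have hm0 : (0 : ℝ) < m := by positivity
  have hts : t = m * (t / m) := by field_simp
  have htm : 0 ≤ t / m := div_nonneg ht hm0.le
  have htδ : t / m < δ := by
    rw [div_lt_iff₀ hm0]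
    have h1 : t / δ < m := by exact_mod_cast Nat.lt_floor_add_one (t / δ)
    calc t = t / δ * δ := by field_simp
    _ < m * δ := by exact mul_lt_mul_of_pos_right h1 hδpos
    _ = δ * m := by ring
  rw [hts]
  exact hiter m (t / m) htm htδ X hX
end

section
/- For Hermitian matrices A, B ∈ ℂ^{n×n}, there exists a linear positive trace-preserving map T : ℂ^{n×n} → ℂ^{n×n} with T(B) = A if and only if tr(A) = tr(B) and ‖A‖₁ ≤ ‖B‖₁. -/
open Matrix
open scoped ComplexOrder

/-- The trace norm `‖A‖₁ = tr √(AᴴA)` of a complex square matrix. -/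
noncomputable def traceNorm {n : ℕ} (A : Matrix (Fin n) (Fin n) ℂ) : ℝ :=
  (((Matrix.posSemidef_conjTranspose_mul_self A).1.eigenvectorUnitary.1 *
    diagonal (((↑) : ℝ → ℂ) ∘ Real.sqrt ∘ (Matrix.posSemidef_conjTranspose_mul_self A).1.eigenvalues) *
    (star (Matrix.posSemidef_conjTranspose_mul_self A).1.eigenvectorUnitary :
      Matrix (Fin n) (Fin n) ℂ)).trace).re

variable {n : ℕ}

section UnitaryConj
variable {U : Matrix (Fin n) (Fin n) ℂ}

lemma conj_trace (hU : U ∈ Matrix.unitaryGroup (Fin n) ℂ) (d : Fin n → ℂ) :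
    (U * diagonal d * star U).trace = ∑ i, d i := by
  rw [trace_mul_comm, ← mul_assoc, (mem_unitaryGroup_iff').mp hU, one_mul, trace_diagonal]

lemma conj_mul_conj (hU : U ∈ Matrix.unitaryGroup (Fin n) ℂ) (d e : Fin n → ℂ) :
    (U * diagonal d * star U) * (U * diagonal e * star U) = U * diagonal (d * e) * star U := by
  have h : star U * U = 1 := (mem_unitaryGroup_iff').mp hU
  calc (U * diagonal d * star U) * (U * diagonal e * star U)
      = U * (diagonal d * ((star U * U) * (diagonal e * star U))) := by
        simp only [mul_assoc]
    _ = U * (diagonal d * diagonal e) * star U := by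
        rw [h, one_mul]; simp only [mul_assoc]
    _ = U * diagonal (d * e) * star U := by rw [diagonal_mul_diagonal]; rfl

lemma conj_psd {d : Fin n → ℂ} (h : ∀ i, 0 ≤ d i) : (U * diagonal d * star U).PosSemidef := by
  simpa [star_eq_conjTranspose] using (Matrix.PosSemidef.diagonal h).mul_mul_conjTranspose_same U

lemma conj_sub (d e : Fin n → ℂ) :
    U * diagonal d * star U - U * diagonal e * star U = U * diagonal (d - e) * star U := by
  rw [← sub_mul, ← mul_sub, diagonal_sub]; rfl

lemma conj_add (d e : Fin n → ℂ) :
    U * diagonal d * star U + U * diagonal e * star U = U * diagonal (d + e) * star U := by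
  rw [← add_mul, ← mul_add, diagonal_add]; rfl

end UnitaryConj

section Herm
variable {A : Matrix (Fin n) (Fin n) ℂ} (hA : A.IsHermitian)

lemma herm_decomp_s12 :
    A = (hA.eigenvectorUnitary : Matrix (Fin n) (Fin n) ℂ) *
      diagonal (fun i => (hA.eigenvalues i : ℂ)) *
      star (hA.eigenvectorUnitary : Matrix (Fin n) (Fin n) ℂ) := by
  have := hA.spectral_theorem
  exact this

lemma herm_memU : (hA.eigenvectorUnitary : Matrix (Fin n) (Fin n) ℂ) ∈
    Matrix.unitaryGroup (Fin n) ℂ := hA.eigenvectorUnitary.2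

/-- diag entries of PSD matrices are nonneg -/
lemma psd_diag_nonneg {M : Matrix (Fin n) (Fin n) ℂ} (hM : M.PosSemidef) (i : Fin n) :
    0 ≤ M i i := by
  exact hM.diag_nonneg

lemma psd_trace_nonneg {M : Matrix (Fin n) (Fin n) ℂ} (hM : M.PosSemidef) :
    0 ≤ M.trace := by
  rw [Matrix.trace]
  exact Finset.sum_nonneg fun i _ => psd_diag_nonneg hM i

lemma psd_smul {M : Matrix (Fin n) (Fin n) ℂ} (hM : M.PosSemidef) {c : ℂ} (hc : 0 ≤ c) :
    (c • M).PosSemidef := by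
  refine ⟨?_, fun x => ?_⟩
  · unfold Matrix.IsHermitian
    rw [conjTranspose_smul, hM.1.eq, (IsSelfAdjoint.of_nonneg hc : star c = c)]
  · exact (hM.smul hc).2 x

lemma traceNorm_herm : traceNorm A = ∑ i, |hA.eigenvalues i| := by
  set U := (hA.eigenvectorUnitary : Matrix (Fin n) (Fin n) ℂ) with hUdef
  have hU := herm_memU hA
  set S := U * diagonal (fun i => (Complex.ofReal |hA.eigenvalues i|)) * star U with hSdef
  have hSpsd : S.PosSemidef :=
    conj_psd (fun i => Complex.zero_le_real.mpr (abs_nonneg _))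
  have hS2 : S ^ 2 = Aᴴ * A := by
    have hAdec := herm_decomp_s12 hA
    rw [hA.eq, pow_two, hSdef]
    conv_rhs => rw [hAdec]
    rw [conj_mul_conj hU, conj_mul_conj hU]
    have hfun : ((fun i => Complex.ofReal |hA.eigenvalues i|) * fun i => Complex.ofReal |hA.eigenvalues i|)
        = ((fun i => (hA.eigenvalues i : ℂ)) * fun i => (hA.eigenvalues i : ℂ)) := by
      funext i
      simp only [Pi.mul_apply, ← Complex.ofReal_mul, abs_mul_abs_self]
    rw [hfun]
  have hSeq : S = (Matrix.posSemidef_conjTranspose_mul_self A).1.eigenvectorUnitary.1 *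
      diagonal (((↑) : ℝ → ℂ) ∘ Real.sqrt ∘ (Matrix.posSemidef_conjTranspose_mul_self A).1.eigenvalues) *
      (star (Matrix.posSemidef_conjTranspose_mul_self A).1.eigenvectorUnitary :
        Matrix (Fin n) (Fin n) ℂ) := by
    have hH := (Matrix.posSemidef_conjTranspose_mul_self A).1
    have e1 : Aᴴ * A = cfc (fun x : ℝ => x * x) A := by
      rw [cfc_mul (fun x : ℝ => x) (fun x : ℝ => x) A, cfc_id' ℝ A, hA.eq]
    have e2 : cfc Real.sqrt (Aᴴ * A) = cfc (fun x : ℝ => |x|) A := by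
      rw [e1, ← cfc_comp' Real.sqrt (fun x : ℝ => x * x) A]
      exact cfc_congr fun x _ => Real.sqrt_mul_self_eq_abs x
    have e3 := hA.cfc_eq (fun x : ℝ => |x|)
    rw [← e2, hH.cfc_eq Real.sqrt] at e3
    simp only [IsHermitian.cfc, Unitary.conjStarAlgAut_apply] at e3
    rw [hSdef]
    convert e3.symm using 3
    all_goals rfl
  rw [traceNorm, ← hSeq, hSdef, conj_trace hU]
  rw [← Complex.ofReal_sum]
  exact Complex.ofReal_re _

lemma herm_diag : star (hA.eigenvectorUnitary : Matrix (Fin n) (Fin n) ℂ) * A *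
    (hA.eigenvectorUnitary : Matrix (Fin n) (Fin n) ℂ) =
    diagonal (fun i => (hA.eigenvalues i : ℂ)) := by
  set U := (hA.eigenvectorUnitary : Matrix (Fin n) (Fin n) ℂ)
  have h1 : star U * U = 1 := (mem_unitaryGroup_iff').mp (herm_memU hA)
  conv_lhs => rw [herm_decomp_s12 hA]
  calc star U * (U * diagonal (fun i => (hA.eigenvalues i : ℂ)) * star U) * U
      = (star U * U) * diagonal (fun i => (hA.eigenvalues i : ℂ)) * (star U * U) := by
        simp only [mul_assoc]
    _ = diagonal (fun i => (hA.eigenvalues i : ℂ)) := by rw [h1, one_mul, mul_one]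

lemma conj_trace' {M U : Matrix (Fin n) (Fin n) ℂ} (hU : U ∈ Matrix.unitaryGroup (Fin n) ℂ) :
    (star U * M * U).trace = M.trace := by
  rw [trace_mul_comm, ← mul_assoc, (mem_unitaryGroup_iff).mp hU, one_mul]

lemma traceNorm_le_decomp (hA : A.IsHermitian) {P Q : Matrix (Fin n) (Fin n) ℂ}
    (hP : P.PosSemidef) (hQ : Q.PosSemidef) (h : A = P - Q) :
    traceNorm A ≤ P.trace.re + Q.trace.re := by
  set U := (hA.eigenvectorUnitary : Matrix (Fin n) (Fin n) ℂ) with hUdef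
  have hU := herm_memU hA
  set M := star U * P * U with hM
  set N := star U * Q * U with hN
  have hMpsd : M.PosSemidef := by
    exact hP.conjTranspose_mul_mul_same U
  have hNpsd : N.PosSemidef := by
    exact hQ.conjTranspose_mul_mul_same U
  have hdiag : diagonal (fun i => (hA.eigenvalues i : ℂ)) = M - N := by
    have hc := congrArg (fun X => star U * X * U) h
    simp only [Matrix.mul_sub, Matrix.sub_mul] at hc
    rw [← herm_diag hA]
    exact hc
  have hlam : ∀ i, |hA.eigenvalues i| ≤ (M i i).re + (N i i).re := by
    intro i
    have he : (hA.eigenvalues i : ℂ) = M i i - N i i := by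
      have := congrFun (congrFun hdiag i) i
      simpa [diagonal_apply_eq] using this
    have hre : hA.eigenvalues i = (M i i).re - (N i i).re := by
      have := congrArg Complex.re he
      simpa using this
    have hMre := (Complex.nonneg_iff.mp (psd_diag_nonneg hMpsd i)).1
    have hNre := (Complex.nonneg_iff.mp (psd_diag_nonneg hNpsd i)).1
    rw [abs_le]; constructor <;> [linarith [hre]; linarith [hre]]
  calc traceNorm A = ∑ i, |hA.eigenvalues i| := traceNorm_herm hA
    _ ≤ ∑ i, ((M i i).re + (N i i).re) := Finset.sum_le_sum fun i _ => hlam i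
    _ = M.trace.re + N.trace.re := by
        rw [Finset.sum_add_distrib, Matrix.trace, Matrix.trace, Complex.re_sum, Complex.re_sum]
        rfl
    _ = P.trace.re + Q.trace.re := by rw [hM, hN, conj_trace' hU, conj_trace' hU]

lemma max_add_max_neg (x : ℝ) : max x 0 + max (-x) 0 = |x| := by
  rcases le_or_gt 0 x with h | h
  · rw [max_eq_left h, max_eq_right (by linarith), add_zero, abs_of_nonneg h]
  · rw [max_eq_right h.le, max_eq_left (by linarith), zero_add, abs_of_neg h]

lemma max_sub_max_neg (x : ℝ) : max x 0 - max (-x) 0 = x := by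
  rcases le_or_gt 0 x with h | h
  · rw [max_eq_left h, max_eq_right (by linarith), sub_zero]
  · rw [max_eq_right h.le, max_eq_left (by linarith), zero_sub, neg_neg]

lemma trace_herm : A.trace = ((∑ i, hA.eigenvalues i : ℝ) : ℂ) := by
  conv_lhs => rw [herm_decomp_s12 hA]
  rw [conj_trace (herm_memU hA)]
  push_cast
  rfl

lemma traceNorm_posneg : traceNorm A =
    (∑ i, max (hA.eigenvalues i) 0) + ∑ i, max (-hA.eigenvalues i) 0 := by
  rw [traceNorm_herm hA, ← Finset.sum_add_distrib]
  exact Finset.sum_congr rfl fun i _ => (max_add_max_neg _).symm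

lemma jordan : ∃ P Q : Matrix (Fin n) (Fin n) ℂ, P.PosSemidef ∧ Q.PosSemidef ∧ A = P - Q ∧
    P.trace = ((∑ i, max (hA.eigenvalues i) 0 : ℝ) : ℂ) ∧
    Q.trace = ((∑ i, max (-hA.eigenvalues i) 0 : ℝ) : ℂ) := by
  set U := (hA.eigenvectorUnitary : Matrix (Fin n) (Fin n) ℂ) with hUdef
  have hU := herm_memU hA
  refine ⟨U * diagonal (fun i => ((max (hA.eigenvalues i) 0 : ℝ) : ℂ)) * star U,
    U * diagonal (fun i => ((max (-hA.eigenvalues i) 0 : ℝ) : ℂ)) * star U,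
    conj_psd (fun i => Complex.zero_le_real.mpr (le_max_right _ _)),
    conj_psd (fun i => Complex.zero_le_real.mpr (le_max_right _ _)), ?_, ?_, ?_⟩
  · rw [conj_sub]
    have hf : ((fun i => ((max (hA.eigenvalues i) 0 : ℝ) : ℂ)) -
        fun i => ((max (-hA.eigenvalues i) 0 : ℝ) : ℂ)) =
        fun i => (hA.eigenvalues i : ℂ) := by
      funext i
      simp only [Pi.sub_apply, ← Complex.ofReal_sub, max_sub_max_neg]
    rw [hf]
    exact herm_decomp_s12 hA
  · rw [conj_trace hU, ← Complex.ofReal_sum]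
  · rw [conj_trace hU, ← Complex.ofReal_sum]

end Herm

lemma psd_trace_zero {M : Matrix (Fin n) (Fin n) ℂ} (hM : M.PosSemidef) (h : M.trace = 0) :
    M = 0 := by
  have htr := trace_herm hM.1
  rw [h] at htr
  have hsum : ∑ i, hM.1.eigenvalues i = 0 := by exact_mod_cast htr.symm
  have hzero : ∀ i ∈ Finset.univ, hM.1.eigenvalues i = 0 :=
    (Finset.sum_eq_zero_iff_of_nonneg fun i _ => hM.eigenvalues_nonneg i).mp hsum
  have hd : (fun i => (hM.1.eigenvalues i : ℂ)) = fun _ => 0 := by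
    funext i
    rw [hzero i (Finset.mem_univ i)]
    simp
  rw [herm_decomp_s12 hM.1, hd]
  simp

lemma traceNorm_le_of_ptp {A B : Matrix (Fin n) (Fin n) ℂ} (hA : A.IsHermitian)
    (hB : B.IsHermitian) (T : Matrix (Fin n) (Fin n) ℂ →ₗ[ℂ] Matrix (Fin n) (Fin n) ℂ)
    (hTpos : ∀ X : Matrix (Fin n) (Fin n) ℂ, X.PosSemidef → (T X).PosSemidef)
    (hTtr : ∀ X : Matrix (Fin n) (Fin n) ℂ, (T X).trace = X.trace)
    (hTB : T B = A) : traceNorm A ≤ traceNorm B := by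
  obtain ⟨P, Q, hP, hQ, hBPQ, hPtr, hQtr⟩ := jordan hB
  have hAeq : A = T P - T Q := by rw [← hTB, hBPQ, map_sub]
  have hle := traceNorm_le_decomp hA (hTpos P hP) (hTpos Q hQ) hAeq
  rw [hTtr P, hTtr Q, hPtr, hQtr, Complex.ofReal_re, Complex.ofReal_re] at hle
  rw [traceNorm_posneg hB]
  exact hle

lemma rho_exists {M σ : Matrix (Fin n) (Fin n) ℂ} (hM : M.PosSemidef) (hσ : σ.PosSemidef)
    (hσtr : σ.trace = 1) {a b c : ℝ} (hMtr : M.trace = (a : ℂ)) (hc : 0 ≤ c) (ha : 0 ≤ a)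
    (hb : b = a + c) :
    ∃ ρ : Matrix (Fin n) (Fin n) ℂ, ρ.PosSemidef ∧ ρ.trace = 1 ∧
      ((b : ℝ) : ℂ) • ρ = M + ((c : ℝ) : ℂ) • σ := by
  by_cases hb0 : b = 0
  · have ha0 : a = 0 := by linarith
    have hc0 : c = 0 := by linarith
    have hM0 : M = 0 := psd_trace_zero hM (by rw [hMtr, ha0]; simp)
    exact ⟨σ, hσ, hσtr, by rw [hb0, hM0, hc0]; simp⟩
  · have hbpos : 0 < b := lt_of_le_of_ne (by linarith) (Ne.symm hb0)
    refine ⟨((b⁻¹ : ℝ) : ℂ) • (M + ((c : ℝ) : ℂ) • σ), ?_, ?_, ?_⟩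
    · exact psd_smul (hM.add (psd_smul hσ (Complex.zero_le_real.mpr hc)))
        (Complex.zero_le_real.mpr (by positivity))
    · rw [trace_smul, trace_add, trace_smul, hMtr, hσtr, smul_eq_mul, smul_eq_mul, mul_one]
      rw [← Complex.ofReal_add, ← hb]
      rw [← Complex.ofReal_mul, inv_mul_cancel₀ hb0]
      simp
    · rw [smul_smul, ← Complex.ofReal_mul, mul_inv_cancel₀ hb0]
      simp

lemma construct_ptp {A B : Matrix (Fin n) (Fin n) ℂ} (hA : A.IsHermitian) (hB : B.IsHermitian)
    (hn : 0 < n) (htr : A.trace = B.trace) (hnorm : traceNorm A ≤ traceNorm B) :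
    ∃ T : Matrix (Fin n) (Fin n) ℂ →ₗ[ℂ] Matrix (Fin n) (Fin n) ℂ,
      (∀ X : Matrix (Fin n) (Fin n) ℂ, X.PosSemidef → (T X).PosSemidef) ∧
      (∀ X : Matrix (Fin n) (Fin n) ℂ, (T X).trace = X.trace) ∧
      T B = A := by
  classical
  set lA := hA.eigenvalues with hlA
  set lB := hB.eigenvalues with hlB
  set ap := ∑ i, max (lA i) 0 with hap
  set am := ∑ i, max (-lA i) 0 with ham
  set bp := ∑ i, max (lB i) 0 with hbp
  set bm := ∑ i, max (-lB i) 0 with hbm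
  -- trace identities
  have hsumA : ∑ i, lA i = ap - am := by
    rw [hap, ham, ← Finset.sum_sub_distrib]
    exact (Finset.sum_congr rfl fun i _ => (max_sub_max_neg _).symm)
  have hsumB : ∑ i, lB i = bp - bm := by
    rw [hbp, hbm, ← Finset.sum_sub_distrib]
    exact (Finset.sum_congr rfl fun i _ => (max_sub_max_neg _).symm)
  have htr' : ap - am = bp - bm := by
    have h1 := trace_herm hA
    have h2 := trace_herm hB
    rw [h1, h2] at htr
    have : ∑ i, lA i = ∑ i, lB i := by exact_mod_cast htr
    rw [hsumA, hsumB] at this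
    exact this
  have hnorm' : ap + am ≤ bp + bm := by
    rw [traceNorm_posneg hA, traceNorm_posneg hB] at hnorm
    exact hnorm
  have hap0 : 0 ≤ ap := Finset.sum_nonneg fun i _ => le_max_right _ _
  have ham0 : 0 ≤ am := Finset.sum_nonneg fun i _ => le_max_right _ _
  have hbp0 : 0 ≤ bp := Finset.sum_nonneg fun i _ => le_max_right _ _
  have hbm0 : 0 ≤ bm := Finset.sum_nonneg fun i _ => le_max_right _ _
  set c := bp - ap with hc
  have hc0 : 0 ≤ c := by simp only [hc]; linarith
  have hcm : bm = am + c := by simp only [hc]; linarith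
  have hcp : bp = ap + c := by simp only [hc]; linarith
  -- the maximally mixed state
  set σ : Matrix (Fin n) (Fin n) ℂ := (((n : ℝ)⁻¹ : ℝ) : ℂ) • (1 : Matrix (Fin n) (Fin n) ℂ)
    with hσ
  have hnne : (n : ℝ) ≠ 0 := Nat.cast_ne_zero.mpr hn.ne'
  have hσpsd : σ.PosSemidef :=
    psd_smul Matrix.PosSemidef.one (Complex.zero_le_real.mpr (by positivity))
  have hσtr : σ.trace = 1 := by
    rw [hσ, trace_smul, trace_one, smul_eq_mul, Fintype.card_fin]
    rw [show ((n : ℂ)) = (((n : ℝ) : ℂ)) by push_cast; ring, ← Complex.ofReal_mul,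
      inv_mul_cancel₀ hnne]
    simp
  -- Jordan decomposition of A
  obtain ⟨Ap, Am, hApPsd, hAmPsd, hAeq, hAptr, hAmtr⟩ := jordan hA
  -- the states
  obtain ⟨ρ₁, hρ₁psd, hρ₁tr, hρ₁⟩ := rho_exists hApPsd hσpsd hσtr hAptr hc0 hap0 hcp
  obtain ⟨ρ₂, hρ₂psd, hρ₂tr, hρ₂⟩ := rho_exists hAmPsd hσpsd hσtr hAmtr hc0 ham0 hcm
  -- the measurement operators
  set UB := (hB.eigenvectorUnitary : Matrix (Fin n) (Fin n) ℂ) with hUB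
  have hUBmem := herm_memU hB
  set dp : Fin n → ℂ := fun i => if 0 ≤ lB i then 1 else 0 with hdp
  set dm : Fin n → ℂ := fun i => if 0 ≤ lB i then 0 else 1 with hdm
  set C₁ := diagonal dp * star UB with hC₁
  set C₂ := diagonal dm * star UB with hC₂
  have hCT : ∀ d : Fin n → ℂ, (∀ i, star (d i) = d i) →
      (diagonal d * star UB)ᴴ = UB * diagonal d := by
    intro d hd
    rw [conjTranspose_mul, ← star_eq_conjTranspose (star UB), star_star, diagonal_conjTranspose]
    rw [show (star d : Fin n → ℂ) = d from funext hd]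
  have hdps : ∀ i, star (dp i) = dp i := by
    intro i
    rw [hdp]
    by_cases h : 0 ≤ lB i <;> simp [h]
  have hdms : ∀ i, star (dm i) = dm i := by
    intro i
    rw [hdm]
    by_cases h : 0 ≤ lB i <;> simp [h]
  have hC₁T : C₁ᴴ = UB * diagonal dp := hCT dp hdps
  have hC₂T : C₂ᴴ = UB * diagonal dm := hCT dm hdms
  -- completeness: C₁ᴴC₁ + C₂ᴴC₂ = 1
  have hcomplete : C₁ᴴ * C₁ + C₂ᴴ * C₂ = 1 := by
    rw [hC₁T, hC₂T, hC₁, hC₂]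
    have e1 : UB * diagonal dp * (diagonal dp * star UB) = UB * diagonal (dp * dp) * star UB := by
      rw [mul_assoc, ← mul_assoc (diagonal dp), diagonal_mul_diagonal, ← mul_assoc]; rfl
    have e2 : UB * diagonal dm * (diagonal dm * star UB) = UB * diagonal (dm * dm) * star UB := by
      rw [mul_assoc, ← mul_assoc (diagonal dm), diagonal_mul_diagonal, ← mul_assoc]; rfl
    rw [e1, e2, conj_add]
    have e3 : dp * dp + dm * dm = fun _ => (1 : ℂ) := by
      funext i
      simp only [Pi.add_apply, Pi.mul_apply, hdp, hdm]
      by_cases h : 0 ≤ lB i <;> simp [h]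
    rw [e3, diagonal_one, mul_one]
    exact (mem_unitaryGroup_iff).mp hUBmem
  -- trace of measurement on B
  have hmeas : ∀ d : Fin n → ℂ, (∀ i, star (d i) = d i) →
      ((diagonal d * star UB) * B * (diagonal d * star UB)ᴴ).trace
        = ∑ i, d i * (lB i : ℂ) * d i := by
    intro d hd
    rw [hCT d hd]
    have : (diagonal d * star UB) * B * (UB * diagonal d)
        = diagonal d * (star UB * B * UB) * diagonal d := by
      simp only [mul_assoc]
    rw [this, herm_diag hB, diagonal_mul_diagonal, diagonal_mul_diagonal, trace_diagonal]
  have hmeas₁ : (C₁ * B * C₁ᴴ).trace = ((bp : ℝ) : ℂ) := by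
    rw [hC₁, hmeas dp hdps, hbp, Complex.ofReal_sum]
    refine Finset.sum_congr rfl fun i _ => ?_
    simp only [hdp]
    by_cases h : 0 ≤ lB i
    · simp [h, max_eq_left h]
    · simp [h, max_eq_right (le_of_lt (lt_of_not_ge h))]
  have hmeas₂ : (C₂ * B * C₂ᴴ).trace = ((-bm : ℝ) : ℂ) := by
    rw [hC₂, hmeas dm hdms, hbm]
    push_cast
    rw [← Finset.sum_neg_distrib]
    refine Finset.sum_congr rfl fun i _ => ?_
    simp only [hdm]
    by_cases h : 0 ≤ lB i
    · simp [h, max_eq_right (by linarith : -lB i ≤ 0)]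
    · simp [h, max_eq_left (by linarith [lt_of_not_ge h] : (0:ℝ) ≤ -lB i)]
  -- the map
  set T : Matrix (Fin n) (Fin n) ℂ →ₗ[ℂ] Matrix (Fin n) (Fin n) ℂ :=
    { toFun := fun X => (C₁ * X * C₁ᴴ).trace • ρ₁ + (C₂ * X * C₂ᴴ).trace • ρ₂
      map_add' := by
        intro X Y
        simp only [Matrix.mul_add, Matrix.add_mul, trace_add, add_smul]
        abel
      map_smul' := by
        intro r X
        simp only [Matrix.mul_smul, Matrix.smul_mul, trace_smul, smul_eq_mul, RingHom.id_apply,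
          smul_add, smul_smul] } with hT
  refine ⟨T, ?_, ?_, ?_⟩
  · intro X hX
    have h1 : (C₁ * X * C₁ᴴ).PosSemidef := hX.mul_mul_conjTranspose_same C₁
    have h2 : (C₂ * X * C₂ᴴ).PosSemidef := hX.mul_mul_conjTranspose_same C₂
    exact (psd_smul hρ₁psd (psd_trace_nonneg h1)).add (psd_smul hρ₂psd (psd_trace_nonneg h2))
  · intro X
    show ((C₁ * X * C₁ᴴ).trace • ρ₁ + (C₂ * X * C₂ᴴ).trace • ρ₂).trace = X.trace
    rw [trace_add, trace_smul, trace_smul, hρ₁tr, hρ₂tr, smul_eq_mul, smul_eq_mul,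
      mul_one, mul_one, trace_mul_cycle C₁ X C₁ᴴ, trace_mul_cycle C₂ X C₂ᴴ,
      ← trace_add, ← Matrix.add_mul, hcomplete, one_mul]
  · show (C₁ * B * C₁ᴴ).trace • ρ₁ + (C₂ * B * C₂ᴴ).trace • ρ₂ = A
    rw [hmeas₁, hmeas₂, hρ₁]
    rw [show ((-bm : ℝ) : ℂ) = -((bm : ℝ) : ℂ) by push_cast; ring, neg_smul, hρ₂]
    rw [hAeq]
    abel

/-- For Hermitian `A, B`, there is a positive trace-preserving linear map sending `B` to `A`
iff `tr A = tr B` and `‖A‖₁ ≤ ‖B‖₁`. -/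
theorem exists_ptp_map_iff
    {n : ℕ} (A B : Matrix (Fin n) (Fin n) ℂ) (hA : A.IsHermitian) (hB : B.IsHermitian) :
    (∃ T : Matrix (Fin n) (Fin n) ℂ →ₗ[ℂ] Matrix (Fin n) (Fin n) ℂ,
        (∀ X : Matrix (Fin n) (Fin n) ℂ, X.PosSemidef → (T X).PosSemidef) ∧
        (∀ X : Matrix (Fin n) (Fin n) ℂ, (T X).trace = X.trace) ∧
        T B = A) ↔
      A.trace = B.trace ∧ traceNorm A ≤ traceNorm B := by
  constructor
  · rintro ⟨T, hTpos, hTtr, hTB⟩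
    exact ⟨by rw [← hTB]; exact hTtr B, traceNorm_le_of_ptp hA hB T hTpos hTtr hTB⟩
  · rintro ⟨htr, hnorm⟩
    rcases Nat.eq_zero_or_pos n with hn | hn
    · subst hn
      refine ⟨LinearMap.id, fun X hX => hX, fun X => rfl, ?_⟩
      ext i j
      exact i.elim0
    · exact construct_ptp hA hB hn htr hnorm
end

section
/- Let x, y ∈ ℝⁿ. There exists a column-stochastic matrix M ∈ ℝ^{n×n} with My = x if and only if Σⱼ xⱼ = Σⱼ yⱼ and ‖x‖₁ ≤ ‖y‖₁. -/
open Matrix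

/-- There exists a column-stochastic matrix `M` with `M y = x` iff `x` and `y` have the same
total sum and `‖x‖₁ ≤ ‖y‖₁`. -/
theorem exists_column_stochastic_iff
    {n : ℕ} (x y : Fin n → ℝ) :
    (∃ M : Matrix (Fin n) (Fin n) ℝ,
        (∀ i j, 0 ≤ M i j) ∧ (∀ j, ∑ i, M i j = 1) ∧ M.mulVec y = x) ↔
      (∑ j, x j = ∑ j, y j ∧ ∑ j, |x j| ≤ ∑ j, |y j|) := by
  have key : ∀ t : ℝ, max t 0 - max (-t) 0 = t := by
    intro t
    rcases le_total 0 t with h | h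
    · rw [max_eq_left h, max_eq_right (neg_nonpos.mpr h)]; ring
    · rw [max_eq_right h, max_eq_left (neg_nonneg.mpr h)]; ring
  have keyabs : ∀ t : ℝ, max t 0 + max (-t) 0 = |t| := by
    intro t
    rcases le_total 0 t with h | h
    · rw [max_eq_left h, max_eq_right (neg_nonpos.mpr h), abs_of_nonneg h]; ring
    · rw [max_eq_right h, max_eq_left (neg_nonneg.mpr h), abs_of_nonpos h]; ring
  constructor
  · rintro ⟨M, h0, h1, hM⟩
    have hx : ∀ i, x i = ∑ j, M i j * y j := by
      intro i; rw [← hM]; rfl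
    constructor
    · calc ∑ j, x j = ∑ i, ∑ j, M i j * y j := by simp [hx]
        _ = ∑ j, (∑ i, M i j) * y j := by rw [Finset.sum_comm]; simp [Finset.sum_mul]
        _ = ∑ j, y j := by simp [h1]
    · calc ∑ i, |x i| ≤ ∑ i, ∑ j, M i j * |y j| := by
            apply Finset.sum_le_sum; intro i _
            rw [hx i]
            refine (Finset.abs_sum_le_sum_abs _ _).trans ?_
            apply Finset.sum_le_sum; intro j _
            rw [abs_mul, abs_of_nonneg (h0 i j)]
        _ = ∑ j, (∑ i, M i j) * |y j| := by rw [Finset.sum_comm]; simp [Finset.sum_mul]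
        _ = ∑ j, |y j| := by simp [h1]
  · rintro ⟨hs, ha⟩
    rcases Nat.eq_zero_or_pos n with hn | hn
    · subst hn
      exact ⟨0, fun i j => le_refl _, fun j => j.elim0, funext fun i => i.elim0⟩
    set z : Fin n := ⟨0, hn⟩ with hz
    set p := ∑ j, max (y j) 0 with hp
    set q := ∑ j, max (-(y j)) 0 with hq
    set p' := ∑ j, max (x j) 0 with hp'
    set q' := ∑ j, max (-(x j)) 0 with hq'
    have hppos : 0 ≤ p := Finset.sum_nonneg fun j _ => le_max_right _ _
    have hqpos : 0 ≤ q := Finset.sum_nonneg fun j _ => le_max_right _ _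
    have hp'pos : 0 ≤ p' := Finset.sum_nonneg fun j _ => le_max_right _ _
    have hq'pos : 0 ≤ q' := Finset.sum_nonneg fun j _ => le_max_right _ _
    have hsum' : p' - q' = p - q := by
      have hx : ∑ j, x j = p' - q' := by
        rw [hp', hq', ← Finset.sum_sub_distrib]
        exact Finset.sum_congr rfl fun j _ => (key (x j)).symm
      have hy : ∑ j, y j = p - q := by
        rw [hp, hq, ← Finset.sum_sub_distrib]
        exact Finset.sum_congr rfl fun j _ => (key (y j)).symm
      rw [← hx, ← hy]; exact hs
    have habs' : p' + q' ≤ p + q := by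
      have hx : ∑ j, |x j| = p' + q' := by
        rw [hp', hq', ← Finset.sum_add_distrib]
        exact Finset.sum_congr rfl fun j _ => (keyabs (x j)).symm
      have hy : ∑ j, |y j| = p + q := by
        rw [hp, hq, ← Finset.sum_add_distrib]
        exact Finset.sum_congr rfl fun j _ => (keyabs (y j)).symm
      rw [← hx, ← hy]; exact ha
    have hp'le : p' ≤ p := by linarith
    have hq'le : q' ≤ q := by linarith
    have hpq : p - p' = q - q' := by linarith
    -- if p = 0 then all positive parts of x vanish
    have hpzero : p = 0 → ∀ i, max (x i) 0 = 0 := by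
      intro h0 i
      have : p' = 0 := le_antisymm (h0 ▸ hp'le) hp'pos
      have hsum0 : ∑ j, max (x j) 0 = 0 := hp' ▸ this
      exact (Finset.sum_eq_zero_iff_of_nonneg
        (fun j _ => le_max_right (x j) 0)).mp hsum0 i (Finset.mem_univ i)
    have hqzero : q = 0 → ∀ i, max (-(x i)) 0 = 0 := by
      intro h0 i
      have hq'0 : q' = 0 := le_antisymm (h0 ▸ hq'le) hq'pos
      have hsum0 : ∑ j, max (-(x j)) 0 = 0 := hq' ▸ hq'0
      exact (Finset.sum_eq_zero_iff_of_nonneg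
        (fun j _ => le_max_right (-(x j)) 0)).mp hsum0 i (Finset.mem_univ i)
    set a : Fin n → ℝ := fun i => max (x i) 0 / p + (if i = z then (p - p') / p else 0) with hA
    set b : Fin n → ℝ :=
      fun i => max (-(x i)) 0 / q + (if i = z then (p - p') / q else 0) with hB
    refine ⟨fun i j => if 0 < y j then a i else if y j < 0 then b i else (if i = z then 1 else 0),
      ?_, ?_, ?_⟩
    · -- nonnegativity
      intro i j
      dsimp only
      split_ifs with h1 h2 h3
      · -- y j > 0, so p > 0
        have hpgt : 0 < p := lt_of_lt_of_le (by simpa [max_eq_left h1.le] using h1)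
          (Finset.single_le_sum (f := fun k => max (y k) 0)
            (fun k _ => le_max_right _ _) (Finset.mem_univ j))
        rw [hA]
        have : (0:ℝ) ≤ (if i = z then (p - p') / p else 0) := by
          split_ifs
          · exact div_nonneg (by linarith) hpgt.le
          · exact le_refl _
        have h2 : (0:ℝ) ≤ max (x i) 0 / p := div_nonneg (le_max_right _ _) hpgt.le
        linarith
      · -- y j < 0, so q > 0
        have hqgt : 0 < q := lt_of_lt_of_le (by simp [max_eq_left (neg_nonneg.mpr h2.le)]; linarith)
          (Finset.single_le_sum (f := fun k => max (-(y k)) 0)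
            (fun k _ => le_max_right _ _) (Finset.mem_univ j))
        rw [hB]
        have : (0:ℝ) ≤ (if i = z then (p - p') / q else 0) := by
          split_ifs
          · exact div_nonneg (by linarith) hqgt.le
          · exact le_refl _
        have h3 : (0:ℝ) ≤ max (-(x i)) 0 / q := div_nonneg (le_max_right _ _) hqgt.le
        linarith
      · exact zero_le_one
      · exact le_refl _
    · -- column sums
      intro j
      dsimp only
      split_ifs with h1 h2
      · have hpgt : 0 < p := lt_of_lt_of_le (by simpa [max_eq_left h1.le] using h1)
          (Finset.single_le_sum (f := fun k => max (y k) 0)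
            (fun k _ => le_max_right _ _) (Finset.mem_univ j))
        rw [hA]
        rw [Finset.sum_add_distrib, ← Finset.sum_div, ← hp', Finset.sum_ite_eq' Finset.univ z]
        simp only [Finset.mem_univ, if_true]
        field_simp
        ring
      · have hqgt : 0 < q := lt_of_lt_of_le (by simp [max_eq_left (neg_nonneg.mpr h2.le)]; linarith)
          (Finset.single_le_sum (f := fun k => max (-(y k)) 0)
            (fun k _ => le_max_right _ _) (Finset.mem_univ j))
        rw [hB]
        rw [Finset.sum_add_distrib, ← Finset.sum_div, ← hq', Finset.sum_ite_eq' Finset.univ z]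
        simp only [Finset.mem_univ, if_true]
        rw [hpq]
        field_simp
        ring
      · rw [Finset.sum_ite_eq' Finset.univ z]
        simp
    · -- mulVec
      funext i
      show ∑ j, (if 0 < y j then a i else if y j < 0 then b i else
          (if i = z then 1 else 0)) * y j = x i
      have step : ∀ j, (if 0 < y j then a i else if y j < 0 then b i else
          (if i = z then 1 else 0)) * y j = a i * max (y j) 0 - b i * max (-(y j)) 0 := by
        intro j
        rcases lt_trichotomy 0 (y j) with h | h | h
        · rw [if_pos h, max_eq_left h.le, max_eq_right (by linarith)]; ring
        · rw [if_neg (by linarith), if_neg (by linarith), ← h]; simp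
        · rw [if_neg (by linarith), if_pos h, max_eq_right h.le,
            max_eq_left (by linarith)]; ring
      rw [Finset.sum_congr rfl fun j _ => step j, Finset.sum_sub_distrib,
        ← Finset.mul_sum, ← Finset.mul_sum, ← hp, ← hq]
      have claimA : a i * p = max (x i) 0 + (if i = z then p - p' else 0) := by
        rcases eq_or_lt_of_le hppos with h0 | h0
        · have hp'0 : p' = 0 := le_antisymm (h0 ▸ hp'le) hp'pos
          rw [hpzero h0.symm i, ← h0, hp'0, mul_zero]
          simp
        · rw [hA]
          have hne : p ≠ 0 := ne_of_gt h0
          rcases eq_or_ne i z with hiz | hiz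
          · simp only [if_pos hiz]; field_simp
          · simp only [if_neg hiz]; field_simp; ring
      have claimB : b i * q = max (-(x i)) 0 + (if i = z then p - p' else 0) := by
        rcases eq_or_lt_of_le hqpos with h0 | h0
        · have hq'0 : q' = 0 := le_antisymm (h0 ▸ hq'le) hq'pos
          have hpp' : p - p' = 0 := by rw [hpq, ← h0, hq'0]; ring
          rw [hqzero h0.symm i, ← h0, hpp', mul_zero]
          simp
        · rw [hB]
          have hne : q ≠ 0 := ne_of_gt h0
          rcases eq_or_ne i z with hiz | hiz
          · simp only [if_pos hiz]; field_simp
          · simp only [if_neg hiz]; field_simp; ring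
      rw [claimA, claimB]
      have := key (x i)
      split_ifs <;> linarith
end

section
/- Let d ∈ ℝⁿ have strictly positive entries, D = diag(d), and let A, B ∈ ℂ^{n×n} both be diagonal. Then there exists a quantum channel T (linear, completely positive, trace-preserving) with T(D) = D and T(B) = A if and only if there exists a column-stochastic matrix M ∈ ℝ^{n×n} with Md = d mapping the diagonal vector of B to the diagonal vector of A. -/
open Matrix
open scoped ComplexOrder

/-- A quantum channel: a linear map which is completely positive and trace-preserving. -/
def IsQuantumChannel {n : ℕ}
    (T : Matrix (Fin n) (Fin n) ℂ →ₗ[ℂ] Matrix (Fin n) (Fin n) ℂ) : Prop :=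
  (∀ (m : ℕ) (A : Matrix (Fin n × Fin m) (Fin n × Fin m) ℂ),
      A.PosSemidef → (tensorId T m A).PosSemidef) ∧
  (∀ A : Matrix (Fin n) (Fin n) ℂ, (T A).trace = A.trace)

/- ### Auxiliary material -/

lemma psd_diag_nonneg_s15 {m : Type*} [Fintype m] [DecidableEq m] {C : Matrix m m ℂ}
    (h : C.PosSemidef) (i : m) : 0 ≤ C i i := by
  have H := h.dotProduct_mulVec_nonneg (Pi.single i 1)
  simpa [dotProduct, mulVec, Pi.single_apply] using H

lemma isDiag_eq_sum {n : ℕ} {X : Matrix (Fin n) (Fin n) ℂ} (hX : X.IsDiag) :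
    X = ∑ j, X j j • Matrix.single j j (1:ℂ) := by
  ext a b
  rw [Matrix.sum_apply]
  rcases eq_or_ne a b with rfl | h
  · rw [Finset.sum_eq_single a]
    · simp [Matrix.single]
    · intro j _ hj
      simp [Matrix.single, hj]
    · simp
  · rw [hX h]
    refine (Finset.sum_eq_zero fun j _ => ?_).symm
    simp only [Matrix.smul_apply, Matrix.single, Matrix.of_apply, smul_eq_mul]
    rcases eq_or_ne j a with rfl | hj
    · simp [h]
    · simp [hj]

/-- The channel induced by a stochastic matrix: pinch to the diagonal and apply `M`. -/
noncomputable def stochChannel {n : ℕ} (M : Matrix (Fin n) (Fin n) ℝ) :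
    Matrix (Fin n) (Fin n) ℂ →ₗ[ℂ] Matrix (Fin n) (Fin n) ℂ where
  toFun X := Matrix.diagonal fun i => ∑ k, (M i k : ℂ) * X k k
  map_add' X Y := by
    ext a b
    rcases eq_or_ne a b with rfl | h
    · simp [Matrix.diagonal_apply_eq, mul_add, Finset.sum_add_distrib]
    · simp [Matrix.diagonal_apply_ne _ h]
  map_smul' c X := by
    ext a b
    rcases eq_or_ne a b with rfl | h
    · simp [Matrix.diagonal_apply_eq, Finset.mul_sum, mul_left_comm]
    · simp [Matrix.diagonal_apply_ne _ h]

lemma stochChannel_apply {n : ℕ} (M : Matrix (Fin n) (Fin n) ℝ)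
    (X : Matrix (Fin n) (Fin n) ℂ) (i j : Fin n) :
    stochChannel M X i j = if i = j then ∑ k, (M i k : ℂ) * X k k else 0 :=
  rfl

lemma tensorId_stoch_apply {n m : ℕ} (M : Matrix (Fin n) (Fin n) ℝ)
    (A : Matrix (Fin n × Fin m) (Fin n × Fin m) ℂ) (p q : Fin n × Fin m) :
    tensorId (stochChannel M) m A p q =
      if p.1 = q.1 then ∑ k, (M p.1 k : ℂ) * A (k, p.2) (k, q.2) else 0 := by
  rcases p with ⟨i, p⟩
  rcases q with ⟨j, q⟩
  simp [tensorId, stochChannel_apply]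

/-- For diagonal matrices `A, B` and `D = diag d` with `d > 0`, `A ≺_D B` (existence of a
channel fixing `D` and sending `B` to `A`) holds iff the diagonal of `B` `d`-majorizes the
diagonal of `A`, i.e. some column-stochastic matrix `M` with `M d = d` maps diag `B` to
diag `A`. -/
theorem d_majorization_diagonal
    {n : ℕ} (d : Fin n → ℝ) (hd : ∀ i, 0 < d i)
    (A B : Matrix (Fin n) (Fin n) ℂ) (hA : A.IsDiag) (hB : B.IsDiag) :
    (∃ T : Matrix (Fin n) (Fin n) ℂ →ₗ[ℂ] Matrix (Fin n) (Fin n) ℂ,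
        IsQuantumChannel T ∧
        T (Matrix.diagonal fun i => (d i : ℂ)) = (Matrix.diagonal fun i => (d i : ℂ)) ∧
        T B = A) ↔
      (∃ M : Matrix (Fin n) (Fin n) ℝ,
        (∀ i j, 0 ≤ M i j) ∧ (∀ j, ∑ i, M i j = 1) ∧ M.mulVec d = d ∧
        (∀ i, ∑ j, (M i j : ℂ) * B j j = A i i)) := by
  constructor
  · rintro ⟨T, ⟨hCP, hTr⟩, hD, hTB⟩
    -- `T` is positive (use complete positivity with `m = 1`).
    have pos1 : ∀ X : Matrix (Fin n) (Fin n) ℂ, X.PosSemidef → (T X).PosSemidef := by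
      intro X hX
      have h1 := hCP 1 (X.submatrix Prod.fst Prod.fst) (hX.submatrix _)
      have hEq : T X = (tensorId T 1 (X.submatrix Prod.fst Prod.fst)).submatrix
          (fun i => (i, 0)) (fun i => (i, 0)) := by
        ext i j
        rfl
      rw [hEq]
      exact h1.submatrix _
    set E : Fin n → Matrix (Fin n) (Fin n) ℂ := fun j => Matrix.single j j 1 with hE
    have hEdiag : ∀ j, E j = Matrix.diagonal (fun i => if i = j then (1:ℂ) else 0) := by
      intro j
      ext a b
      simp only [hE, Matrix.single, Matrix.of_apply, Matrix.diagonal_apply]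
      rcases eq_or_ne a b with rfl | h
      · simp [eq_comm]
      · rcases eq_or_ne j a with rfl | hj
        · simp [Ne.symm h]
        · simp only [h, if_false, ite_eq_right_iff, and_imp]
          exact fun hja _ => absurd hja hj
    have hEpsd : ∀ j, (E j).PosSemidef := by
      intro j
      rw [hEdiag j]
      refine Matrix.PosSemidef.diagonal fun i => ?_
      dsimp only
      split <;> norm_num
    have hdiagEntry : ∀ j i, 0 ≤ T (E j) i i := fun j i =>
      psd_diag_nonneg_s15 (pos1 _ (hEpsd j)) i
    have hre : ∀ i j, ((T (E j) i i).re : ℂ) = T (E j) i i := by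
      intro i j
      have h := hdiagEntry j i
      rw [Complex.le_def] at h
      exact Complex.ext rfl (by simpa using h.2)
    refine ⟨fun i j => (T (E j) i i).re, ?_, ?_, ?_, ?_⟩
    · intro i j
      have h := hdiagEntry j i
      rw [Complex.le_def] at h
      simpa using h.1
    · intro j
      have htr := hTr (E j)
      have hEtr : (E j).trace = 1 := by
        simp [hE, Matrix.trace, Matrix.diag, Matrix.single]
      rw [hEtr] at htr
      have hcast : ((∑ i, (T (E j) i i).re : ℝ) : ℂ) = 1 := by
        push_cast
        rw [Finset.sum_congr rfl fun i _ => hre i j]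
        simpa [Matrix.trace, Matrix.diag] using htr
      exact_mod_cast hcast
    · funext i
      have hDsum : (Matrix.diagonal fun i => (d i : ℂ)) =
          ∑ j, (d j : ℂ) • E j := by
        have := isDiag_eq_sum (X := Matrix.diagonal fun i => (d i : ℂ)) (Matrix.isDiag_diagonal _)
        simpa [hE] using this
      have hTD : ∑ j, (d j : ℂ) * T (E j) i i = (d i : ℂ) := by
        have h1 : T (Matrix.diagonal fun i => (d i : ℂ)) = ∑ j, (d j : ℂ) • T (E j) := by
          rw [hDsum, map_sum]
          simp
        have h2 := congrFun (congrFun (h1.symm.trans hD) i) i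
        simpa [Matrix.sum_apply, Matrix.diagonal_apply_eq] using h2
      have : ((∑ j, (T (E j) i i).re * d j : ℝ) : ℂ) = ((d i : ℝ) : ℂ) := by
        push_cast
        rw [Finset.sum_congr rfl fun j _ => by rw [hre i j]]
        rw [← hTD]
        exact Finset.sum_congr rfl fun j _ => mul_comm _ _
      have hreal : (∑ j, (T (E j) i i).re * d j : ℝ) = d i := by exact_mod_cast this
      simpa [Matrix.mulVec, dotProduct] using hreal
    · intro i
      have hBsum : B = ∑ j, B j j • E j := by simpa [hE] using isDiag_eq_sum hB
      have h1 : T B = ∑ j, B j j • T (E j) := by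
        conv_lhs => rw [hBsum]
        rw [map_sum]
        simp
      have h2 := congrFun (congrFun (h1.symm.trans hTB) i) i
      rw [Matrix.sum_apply] at h2
      calc ∑ j, ((T (E j) i i).re : ℂ) * B j j
          = ∑ j, B j j • T (E j) i i := by
            refine Finset.sum_congr rfl fun j _ => ?_
            rw [hre i j, smul_eq_mul, mul_comm]
        _ = A i i := h2
  · rintro ⟨M, hM0, hMcol, hMd, hMB⟩
    refine ⟨stochChannel M, ⟨?_, ?_⟩, ?_, ?_⟩
    · -- complete positivity
      intro m A' hA'
      refine Matrix.PosSemidef.of_dotProduct_mulVec_nonneg ?_ ?_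
      · ext ⟨i, p⟩ ⟨j, q⟩
        rw [Matrix.conjTranspose_apply, tensorId_stoch_apply, tensorId_stoch_apply]
        rcases eq_or_ne i j with rfl | h
        · simp only [if_pos rfl, if_true, eq_self_iff_true, star_sum]
          refine Finset.sum_congr rfl fun k _ => ?_
          rw [star_mul', Complex.star_def, Complex.conj_ofReal]
          congr 1
          exact hA'.1.apply _ _
        · simp [h, Ne.symm h]
      · intro x
        set y : Fin n → Fin n → (Fin n × Fin m → ℂ) :=
          fun i k r => if r.1 = k then x (i, r.2) else 0 with hy
        have hterm : ∀ i k, star (y i k) ⬝ᵥ A' *ᵥ (y i k) =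
            ∑ p, ∑ q, star (x (i, p)) * (A' (k, p) (k, q) * x (i, q)) := by
          intro i k
          simp only [dotProduct, Matrix.mulVec, Fintype.sum_prod_type, hy,
            Pi.star_apply, apply_ite (star : ℂ → ℂ), star_zero, ite_mul, zero_mul,
            mul_ite, mul_zero, Finset.sum_const_zero]
          rw [Finset.sum_comm]
          simp only [Finset.sum_ite_eq', Finset.mem_univ, if_true]
          refine Finset.sum_congr rfl fun p _ => ?_
          congr 1
          rw [Finset.sum_comm]
          simp only [Finset.sum_ite_eq', Finset.mem_univ, if_true]
          rw [Finset.mul_sum]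
        have expand : star x ⬝ᵥ (tensorId (stochChannel M) m A') *ᵥ x =
            ∑ i, ∑ k, (M i k : ℂ) * (star (y i k) ⬝ᵥ A' *ᵥ (y i k)) := by
          simp only [hterm]
          simp only [dotProduct, Matrix.mulVec, Fintype.sum_prod_type,
            tensorId_stoch_apply, Pi.star_apply, ite_mul, zero_mul, mul_ite, mul_zero,
            Finset.sum_ite_eq', Finset.mem_univ, if_true, Finset.sum_const_zero]
          refine Finset.sum_congr rfl fun i _ => ?_
          have L : ∀ p : Fin m, (∑ a : Fin n, ∑ b : Fin m,
              if i = a then (∑ k, (M i k : ℂ) * A' (k, p) (k, b)) * x (a, b) else 0)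
              = ∑ q : Fin m, (∑ k, (M i k : ℂ) * A' (k, p) (k, q)) * x (i, q) := by
            intro p
            rw [Finset.sum_comm]
            simp [Finset.sum_ite_eq]
          simp only [L]
          simp only [Finset.sum_mul, Finset.mul_sum]
          refine (Finset.sum_congr rfl fun p _ => Finset.sum_comm).trans ?_
          rw [Finset.sum_comm]
          refine Finset.sum_congr rfl fun k _ => Finset.sum_congr rfl fun p _ =>
            Finset.sum_congr rfl fun q _ => ?_
          ring
        rw [expand]
        refine Finset.sum_nonneg fun i _ => Finset.sum_nonneg fun k _ => mul_nonneg ?_ (hA'.dotProduct_mulVec_nonneg _)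
        exact_mod_cast hM0 i k
    · -- trace preserving
      intro X
      show (Matrix.diagonal fun i => ∑ k, (M i k : ℂ) * X k k).trace = X.trace
      rw [Matrix.trace_diagonal]
      rw [Finset.sum_comm]
      unfold Matrix.trace
      refine Finset.sum_congr rfl fun k _ => ?_
      rw [← Finset.sum_mul]
      have h1 : (∑ i, (M i k : ℂ)) = 1 := by exact_mod_cast hMcol k
      rw [h1, one_mul]
      rfl
    · -- fixes D
      ext a b
      rcases eq_or_ne a b with rfl | h
      · rw [stochChannel_apply, if_pos rfl, Matrix.diagonal_apply_eq]
        have := congrFun hMd a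
        simp only [Matrix.mulVec, dotProduct] at this
        have hcast : ((∑ k, M a k * d k : ℝ) : ℂ) = ((d a : ℝ) : ℂ) := by exact_mod_cast this
        push_cast at hcast
        simpa [Matrix.diagonal_apply_eq] using hcast
      · rw [stochChannel_apply, if_neg h, Matrix.diagonal_apply_ne _ h]
    · -- sends B to A
      ext a b
      rcases eq_or_ne a b with rfl | h
      · rw [stochChannel_apply, if_pos rfl]
        exact hMB a
      · rw [stochChannel_apply, if_neg h]
        exact (hA h).symm
end

section
/- Let d ∈ ℝⁿ have strictly positive entries, D = diag(d), ρ a density matrix, and j ∈ {1,…,n}. Then there exists a quantum channel T with T(D) = D and T(|eⱼ⟩⟨eⱼ|) = ρ if and only if D − dⱼρ is positive semidefinite. -/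
open Matrix
open scoped ComplexOrder Kronecker

section Aux

lemma smul_posSemidef' {m : Type*} [Fintype m] {r : ℝ} (hr : 0 ≤ r)
    {A : Matrix m m ℂ} (hA : A.PosSemidef) : ((r : ℂ) • A).PosSemidef := by
  refine .of_dotProduct_mulVec_nonneg ?_ fun x => ?_
  · unfold Matrix.IsHermitian
    rw [conjTranspose_smul, hA.1.eq]
    simp
  · rw [smul_mulVec, dotProduct_smul]
    exact mul_nonneg (by exact_mod_cast hr) (hA.dotProduct_mulVec_nonneg x)

open scoped MatrixOrder Matrix.Norms.L2Operator in
lemma posSemidef_iff_eq_transpose_mul_self {m : Type*} [Fintype m] [DecidableEq m]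
    {A : Matrix m m ℂ} : A.PosSemidef ↔ ∃ B : Matrix m m ℂ, A = Bᴴ * B := by
  constructor
  · intro hA
    exact CStarAlgebra.nonneg_iff_eq_star_mul_self.mp hA.nonneg
  · rintro ⟨B, rfl⟩
    exact posSemidef_conjTranspose_mul_self B

lemma kron_posSemidef' {a b : Type*} [Fintype a] [Fintype b] [DecidableEq a] [DecidableEq b]
    {A : Matrix a a ℂ} {B : Matrix b b ℂ} (hA : A.PosSemidef) (hB : B.PosSemidef) :
    (A ⊗ₖ B).PosSemidef := by
  obtain ⟨C, rfl⟩ := posSemidef_iff_eq_transpose_mul_self.mp hA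
  obtain ⟨D, rfl⟩ := posSemidef_iff_eq_transpose_mul_self.mp hB
  rw [mul_kronecker_mul]
  have h : Cᴴ ⊗ₖ Dᴴ = (C ⊗ₖ D)ᴴ := by
    ext ⟨p, q⟩ ⟨r, s⟩
    simp [kroneckerMap_apply, conjTranspose_apply, mul_comm]
  rw [h]
  exact posSemidef_conjTranspose_mul_self _

lemma psd_trace_zero_s17 {m : Type*} [Fintype m] [DecidableEq m]
    {A : Matrix m m ℂ} (hA : A.PosSemidef) (h : A.trace = 0) : A = 0 := by
  obtain ⟨B, rfl⟩ := posSemidef_iff_eq_transpose_mul_self.mp hA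
  suffices hB : B = 0 by simp [hB]
  have h2 : (Bᴴ * B).trace = ((∑ i, ∑ k, Complex.normSq (B k i) : ℝ) : ℂ) := by
    simp only [Matrix.trace, Matrix.diag, Matrix.mul_apply, Matrix.conjTranspose_apply]
    push_cast
    congr 1
    ext i
    congr 1
    ext k
    rw [Complex.normSq_eq_conj_mul_self]
    rfl
  rw [h2] at h
  have h3 : (∑ i, ∑ k, Complex.normSq (B k i) : ℝ) = 0 := by exact_mod_cast h
  ext k i
  have h4 : ∀ i ∈ (Finset.univ : Finset m), (0:ℝ) ≤ ∑ k, Complex.normSq (B k i) :=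
    fun i _ => Finset.sum_nonneg fun k _ => Complex.normSq_nonneg _
  have h5 := (Finset.sum_eq_zero_iff_of_nonneg h4).mp h3 i (Finset.mem_univ i)
  have h6 := (Finset.sum_eq_zero_iff_of_nonneg
    (fun k _ => Complex.normSq_nonneg (B k i))).mp h5 k (Finset.mem_univ k)
  simpa using Complex.normSq_eq_zero.mp h6

lemma sum_posSemidef {m ι : Type*} [Fintype m] (s : Finset ι)
    (f : ι → Matrix m m ℂ) (hf : ∀ i ∈ s, (f i).PosSemidef) :
    (∑ i ∈ s, f i).PosSemidef := by
  classical
  induction s using Finset.induction_on with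
  | empty => simpa using Matrix.PosSemidef.zero
  | insert x s hx ih =>
    rw [Finset.sum_insert hx]
    exact ((hf _ (Finset.mem_insert_self _ _)).add
      (ih fun i hi => hf i (Finset.mem_insert_of_mem hi)))

/-- The channel construction. -/
noncomputable def chan {n : ℕ} (ρ S : Matrix (Fin n) (Fin n) ℂ) (j : Fin n) (c : ℂ) :
    Matrix (Fin n) (Fin n) ℂ →ₗ[ℂ] Matrix (Fin n) (Fin n) ℂ where
  toFun A := A j j • ρ + (c⁻¹ * ∑ i ∈ Finset.univ.erase j, A i i) • S
  map_add' A B := by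
    simp only [Matrix.add_apply, Finset.sum_add_distrib, mul_add, add_smul]
    abel
  map_smul' r A := by
    simp only [Matrix.smul_apply, smul_eq_mul, Finset.mul_sum, RingHom.id_apply, smul_add,
      smul_smul, Finset.mul_sum]
    congr 2
    exact Finset.sum_congr rfl fun x _ => by ring

end Aux

/-- `ρ ≺_D |eⱼ⟩⟨eⱼ|` (existence of a channel fixing `D = diag d` sending `|eⱼ⟩⟨eⱼ|` to `ρ`)
holds iff `D - dⱼ ρ` is positive semidefinite. -/
theorem d_majorized_by_pure_state_iff
    {n : ℕ} (d : Fin n → ℝ) (hd : ∀ i, 0 < d i)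
    (ρ : Matrix (Fin n) (Fin n) ℂ) (hρ : ρ.PosSemidef) (hρtr : ρ.trace = 1)
    (j : Fin n) :
    (∃ T : Matrix (Fin n) (Fin n) ℂ →ₗ[ℂ] Matrix (Fin n) (Fin n) ℂ,
        IsQuantumChannel T ∧
        T (Matrix.diagonal fun i => (d i : ℂ)) = (Matrix.diagonal fun i => (d i : ℂ)) ∧
        T (Matrix.single j j 1) = ρ) ↔
      ((Matrix.diagonal fun i => (d i : ℂ)) - (d j : ℂ) • ρ).PosSemidef := by
  set D : Matrix (Fin n) (Fin n) ℂ := Matrix.diagonal fun i => (d i : ℂ) with hD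
  set S : Matrix (Fin n) (Fin n) ℂ := D - (d j : ℂ) • ρ with hSdef
  set c : ℝ := ∑ i ∈ Finset.univ.erase j, d i with hc
  have hc0 : 0 ≤ c := Finset.sum_nonneg fun i _ => (hd i).le
  have htrD : D.trace = ((d j : ℂ)) + (c : ℂ) := by
    rw [hD, Matrix.trace_diagonal, ← Finset.add_sum_erase _ _ (Finset.mem_univ j)]
    push_cast [hc]
    ring
  have htrS : S.trace = (c : ℂ) := by
    rw [hSdef, Matrix.trace_sub, Matrix.trace_smul, htrD, hρtr]
    simp
  constructor
  · rintro ⟨T, ⟨hCP, _⟩, hTD, hTE⟩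
    -- T maps PSD to PSD
    have key : ∀ B : Matrix (Fin n) (Fin n) ℂ, B.PosSemidef → (T B).PosSemidef := by
      intro B hB
      have h1 : (B.submatrix (Prod.fst : Fin n × Fin 1 → Fin n) Prod.fst).PosSemidef :=
        hB.submatrix _
      have h2 := hCP 1 _ h1
      have h3 : T B = (tensorId T 1 (B.submatrix Prod.fst Prod.fst)).submatrix
          (fun i : Fin n => (i, (0 : Fin 1))) (fun i : Fin n => (i, (0 : Fin 1))) := by
        ext i k
        rfl
      rw [h3]
      exact h2.submatrix _
    have hBdiag : D - (d j : ℂ) • Matrix.single j j 1 =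
        Matrix.diagonal (fun i => if i = j then 0 else (d i : ℂ)) := by
      ext i k
      rw [Matrix.sub_apply, Matrix.smul_apply]
      by_cases hik : i = k
      · subst hik
        by_cases hij : i = j
        · subst hij
          simp [hD, Matrix.single_apply_same]
        · have hz : Matrix.single j j (1:ℂ) i i = 0 := by
            unfold Matrix.single
            rw [Matrix.of_apply, if_neg (by tauto)]
          rw [hz]
          simp [hD, hij]
      · have hz : Matrix.single j j (1:ℂ) i k = 0 := by
          unfold Matrix.single
          rw [Matrix.of_apply, if_neg (by rintro ⟨h1, h2⟩; exact hik (h1.symm.trans h2))]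
        rw [hz]
        simp [hD, Matrix.diagonal_apply_ne _ hik]
    have hBpsd : (D - (d j : ℂ) • Matrix.single j j 1).PosSemidef := by
      rw [hBdiag]
      refine Matrix.posSemidef_diagonal_iff.mpr fun i => ?_
      by_cases hij : i = j <;> simp [hij, Complex.zero_le_real, (hd i).le]
    have hTS : T (D - (d j : ℂ) • Matrix.single j j 1) = S := by
      rw [map_sub, LinearMap.map_smul, hTD, hTE]
    rw [← hTS]
    exact key _ hBpsd
  · intro hS
    refine ⟨chan ρ S j (c : ℂ), ⟨?_, ?_⟩, ?_, ?_⟩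
    · -- complete positivity
      intro m A hA
      have hkey : tensorId (chan ρ S j (c : ℂ)) m A =
          ρ ⊗ₖ (A.submatrix (fun p : Fin m => (j, p)) (fun p : Fin m => (j, p))) +
          (((c⁻¹ : ℝ) : ℂ)) • (S ⊗ₖ (∑ i ∈ Finset.univ.erase j,
            A.submatrix (fun p : Fin m => (i, p)) (fun p : Fin m => (i, p)))) := by
        ext ⟨p₁, p₂⟩ ⟨q₁, q₂⟩
        simp only [tensorId, chan, LinearMap.coe_mk, AddHom.coe_mk, Matrix.of_apply,
          Matrix.add_apply, Matrix.smul_apply, kroneckerMap_apply, Matrix.sum_apply,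
          Matrix.submatrix_apply, smul_eq_mul, Complex.ofReal_inv]
        ring
      rw [hkey]
      refine (kron_posSemidef' hρ (hA.submatrix _)).add
        (smul_posSemidef' (inv_nonneg.mpr hc0) (kron_posSemidef' hS ?_))
      exact sum_posSemidef _ _ fun i _ => hA.submatrix _
    · -- trace preserving
      intro A
      have htr : (chan ρ S j (c : ℂ) A).trace =
          A j j + ((c : ℂ)⁻¹ * ∑ i ∈ Finset.univ.erase j, A i i) * (c : ℂ) := by
        simp only [chan, LinearMap.coe_mk, AddHom.coe_mk, Matrix.trace_add,
          Matrix.trace_smul, hρtr, htrS, smul_eq_mul, mul_one]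
      rw [htr]
      have htrA : A.trace = A j j + ∑ i ∈ Finset.univ.erase j, A i i := by
        rw [Matrix.trace, ← Finset.add_sum_erase _ _ (Finset.mem_univ j)]
        rfl
      rcases eq_or_ne c 0 with h0 | h0
      · have hempty : Finset.univ.erase j = ∅ := by
          by_contra hne
          have := Finset.sum_pos (fun i _ => hd i) (Finset.nonempty_iff_ne_empty.mpr hne)
          rw [← hc] at this
          exact absurd h0 this.ne'
        rw [htrA, hempty]
        simp
      · have hcne : (c : ℂ) ≠ 0 := by exact_mod_cast h0
        rw [htrA]
        field_simp
    · -- T D = D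
      have hDjj : D j j = (d j : ℂ) := by simp [hD]
      have hsum : ∑ i ∈ Finset.univ.erase j, D i i = (c : ℂ) := by
        rw [hc]
        push_cast
        exact Finset.sum_congr rfl fun i hi => by simp [hD]
      simp only [chan, LinearMap.coe_mk, AddHom.coe_mk]
      rw [hDjj, hsum]
      rcases eq_or_ne c 0 with h0 | h0
      · have hS0 : S = 0 := psd_trace_zero_s17 hS (by rw [htrS, h0]; simp)
        have : D = (d j : ℂ) • ρ := by
          have := hSdef ▸ hS0
          rw [sub_eq_zero] at this
          exact this
        rw [hS0]
        simp [this]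
      · have hcne : (c : ℂ) ≠ 0 := by exact_mod_cast h0
        rw [inv_mul_cancel₀ hcne, one_smul, hSdef]
        abel
    · -- T E_jj = ρ
      simp only [chan, LinearMap.coe_mk, AddHom.coe_mk]
      have h1 : (Matrix.single j j 1 : Matrix (Fin n) (Fin n) ℂ) j j = 1 := by
        simp [Matrix.single]
      have h2 : ∑ i ∈ Finset.univ.erase j, (Matrix.single j j 1 : Matrix (Fin n) (Fin n) ℂ) i i = 0 := by
        refine Finset.sum_eq_zero fun i hi => ?_
        have : i ≠ j := Finset.ne_of_mem_erase hi
        simp [Matrix.single, this.symm]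
      rw [h1, h2]
      simp
end

section
/- Let d ∈ ℝⁿ have strictly positive entries with Σⱼ dⱼ = 1, D = diag(d), and let k be an index at which d attains its minimum. Then for every density matrix ρ there exists a quantum channel T with T(D) = D and T(|e_k⟩⟨e_k|) = ρ; i.e. the pure state |e_k⟩⟨e_k| is maximal with respect to D-majorization. -/
open Matrix
open scoped ComplexOrder

lemma aux_psd_eq {a : Type*} [Fintype a] {P : Matrix a a ℂ} (hP : P.PosSemidef) :
    ∃ B : Matrix a a ℂ, P = Bᴴ * B := by
  classical
  open scoped MatrixOrder in
  obtain ⟨B, hB⟩ := CStarAlgebra.nonneg_iff_eq_star_mul_self.mp hP.nonneg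
  exact ⟨B, hB⟩

lemma aux_posSemidef_kron {a b : Type*} [Fintype a] [Fintype b]
    {P : Matrix a a ℂ} {Q : Matrix b b ℂ} (hP : P.PosSemidef) (hQ : Q.PosSemidef) :
    (Matrix.kroneckerMap (· * ·) P Q).PosSemidef := by
  obtain ⟨B, rfl⟩ := aux_psd_eq hP
  obtain ⟨C, rfl⟩ := aux_psd_eq hQ
  rw [Matrix.mul_kronecker_mul]
  have h : Matrix.kroneckerMap (· * ·) Bᴴ Cᴴ = (Matrix.kroneckerMap (· * ·) B C)ᴴ := by
    ext p q
    simp [Matrix.conjTranspose_apply]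
  rw [h]
  exact Matrix.posSemidef_conjTranspose_mul_self _

lemma aux_posSemidef_sum {ι a : Type*} [Fintype a] (s : Finset ι) (f : ι → Matrix a a ℂ)
    (h : ∀ i ∈ s, (f i).PosSemidef) : (∑ i ∈ s, f i).PosSemidef := by
  classical
  induction s using Finset.induction with
  | empty => simpa using Matrix.PosSemidef.zero
  | insert _ _ hx ih =>
    rw [Finset.sum_insert hx]
    exact ((h _ (Finset.mem_insert_self _ _)).add
      (ih fun i hi => h i (Finset.mem_insert_of_mem hi)))

lemma aux_key {n : ℕ} (d : Fin n → ℝ) (hd : ∀ i, 0 < d i)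
    (k : Fin n) (hk : ∀ i, d k ≤ d i)
    {ρ : Matrix (Fin n) (Fin n) ℂ} (hρ : ρ.PosSemidef) (hρtr : ρ.trace = 1) :
    (Matrix.diagonal (fun i => (d i : ℂ)) - (d k : ℂ) • ρ).PosSemidef := by
  have hherm : (Matrix.diagonal (fun i => (d i : ℂ)) - (d k : ℂ) • ρ).IsHermitian := by
    apply Matrix.IsHermitian.sub
    · rw [Matrix.IsHermitian, Matrix.diagonal_conjTranspose]
      simp [Pi.star_def, Complex.conj_ofReal]
    · rw [Matrix.IsHermitian, Matrix.conjTranspose_smul, hρ.1]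
      simp [Complex.conj_ofReal]
  obtain ⟨B, hB⟩ := aux_psd_eq hρ
  -- trace condition in real form
  have htr : ∑ j, ∑ i, Complex.normSq (B i j) = 1 := by
    have h1 : (Bᴴ * B).trace = 1 := hB ▸ hρtr
    have h2 : (Bᴴ * B).trace = ((∑ j, ∑ i, Complex.normSq (B i j) : ℝ) : ℂ) := by
      rw [Matrix.trace]
      push_cast
      refine Finset.sum_congr rfl fun j _ => ?_
      rw [Matrix.diag_apply, Matrix.mul_apply]
      refine Finset.sum_congr rfl fun i _ => ?_
      rw [Matrix.conjTranspose_apply, Complex.normSq_eq_conj_mul_self]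
      rfl
    rw [h2] at h1
    exact_mod_cast h1
  refine .of_dotProduct_mulVec_nonneg hherm fun x => ?_
  have hquad : star x ⬝ᵥ (Matrix.diagonal (fun i => (d i : ℂ)) - (d k : ℂ) • ρ) *ᵥ x
      = ((∑ i, d i * Complex.normSq (x i)
          - d k * ∑ i, Complex.normSq ((B *ᵥ x) i) : ℝ) : ℂ) := by
    rw [Matrix.sub_mulVec, dotProduct_sub, Matrix.smul_mulVec,
      dotProduct_smul, hB]
    have hdiag : star x ⬝ᵥ (Matrix.diagonal (fun i => (d i : ℂ))) *ᵥ x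
        = ((∑ i, d i * Complex.normSq (x i) : ℝ) : ℂ) := by
      rw [dotProduct]
      push_cast
      refine Finset.sum_congr rfl fun i _ => ?_
      rw [Matrix.mulVec_diagonal, Pi.star_apply, Complex.normSq_eq_conj_mul_self,
        starRingEnd_apply]
      ring
    have hrho : star x ⬝ᵥ (Bᴴ * B) *ᵥ x
        = ((∑ i, Complex.normSq ((B *ᵥ x) i) : ℝ) : ℂ) := by
      rw [← Matrix.mulVec_mulVec, Matrix.dotProduct_mulVec, ← Matrix.star_mulVec,
        dotProduct]
      push_cast
      refine Finset.sum_congr rfl fun i _ => ?_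
      rw [Pi.star_apply, Complex.normSq_eq_conj_mul_self]
      rfl
    rw [hdiag, hrho, smul_eq_mul]
    push_cast
    ring
  rw [hquad]
  rw [Complex.zero_le_real]
  -- now the real inequality
  have hCS : ∑ i, Complex.normSq ((B *ᵥ x) i)
      ≤ (∑ j, ∑ i, Complex.normSq (B i j)) * ∑ j, Complex.normSq (x j) := by
    have hrow : ∀ i, Complex.normSq ((B *ᵥ x) i)
        ≤ (∑ j, Complex.normSq (B i j)) * ∑ j, Complex.normSq (x j) := by
      intro i
      have h1 : ‖(B *ᵥ x) i‖ ≤ ∑ j, ‖B i j‖ * ‖x j‖ := by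
        rw [Matrix.mulVec, dotProduct]
        calc ‖∑ j, B i j * x j‖ ≤ ∑ j, ‖B i j * x j‖ :=
              norm_sum_le _ _
          _ = ∑ j, ‖B i j‖ * ‖x j‖ := by
              simp [norm_mul]
      have h2 : (∑ j, ‖B i j‖ * ‖x j‖) ^ 2
          ≤ (∑ j, ‖B i j‖ ^ 2) * ∑ j, ‖x j‖ ^ 2 :=
        Finset.sum_mul_sq_le_sq_mul_sq _ _ _
      have h3 : Complex.normSq ((B *ᵥ x) i) ≤ (∑ j, ‖B i j‖ * ‖x j‖) ^ 2 := by
        rw [← Complex.sq_norm]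
        exact pow_le_pow_left₀ (norm_nonneg _) h1 2
      calc Complex.normSq ((B *ᵥ x) i) ≤ (∑ j, ‖B i j‖ ^ 2) * ∑ j, ‖x j‖ ^ 2 :=
            le_trans h3 h2
        _ = (∑ j, Complex.normSq (B i j)) * ∑ j, Complex.normSq (x j) := by
            simp [Complex.sq_norm]
    calc ∑ i, Complex.normSq ((B *ᵥ x) i)
        ≤ ∑ i, (∑ j, Complex.normSq (B i j)) * ∑ j, Complex.normSq (x j) :=
          Finset.sum_le_sum fun i _ => hrow i
      _ = (∑ i, ∑ j, Complex.normSq (B i j)) * ∑ j, Complex.normSq (x j) := by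
          rw [Finset.sum_mul]
      _ = (∑ j, ∑ i, Complex.normSq (B i j)) * ∑ j, Complex.normSq (x j) := by
          rw [Finset.sum_comm]
  rw [htr, one_mul] at hCS
  have h4 : d k * ∑ i, Complex.normSq ((B *ᵥ x) i) ≤ d k * ∑ j, Complex.normSq (x j) :=
    mul_le_mul_of_nonneg_left hCS (le_of_lt (hd k))
  have h5 : d k * ∑ j, Complex.normSq (x j) ≤ ∑ i, d i * Complex.normSq (x i) := by
    rw [Finset.mul_sum]
    exact Finset.sum_le_sum fun i _ => mul_le_mul_of_nonneg_right (hk i) (Complex.normSq_nonneg _)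
  linarith


lemma aux_posSemidef_smul {a : Type*} [Fintype a] {M : Matrix a a ℂ} (hM : M.PosSemidef)
    {c : ℝ} (hc : 0 ≤ c) : ((c : ℂ) • M).PosSemidef := by
  refine .of_dotProduct_mulVec_nonneg ?_ ?_
  · rw [Matrix.IsHermitian, Matrix.conjTranspose_smul, hM.1, Complex.star_def, Complex.conj_ofReal]
  · intro x
    rw [Matrix.smul_mulVec, dotProduct_smul, smul_eq_mul]
    exact mul_nonneg (Complex.zero_le_real.mpr hc) (hM.dotProduct_mulVec_nonneg x)

noncomputable def chanMap {n : ℕ} (k : Fin n) (ρ σ : Matrix (Fin n) (Fin n) ℂ) :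
    Matrix (Fin n) (Fin n) ℂ →ₗ[ℂ] Matrix (Fin n) (Fin n) ℂ where
  toFun A := A k k • ρ + (A.trace - A k k) • σ
  map_add' A B := by
    simp only [Matrix.add_apply, Matrix.trace_add]
    module
  map_smul' c A := by
    simp only [Matrix.smul_apply, Matrix.trace_smul, smul_eq_mul, RingHom.id_apply]
    module

lemma chanMap_apply {n : ℕ} (k : Fin n) (ρ σ : Matrix (Fin n) (Fin n) ℂ)
    (A : Matrix (Fin n) (Fin n) ℂ) :
    chanMap k ρ σ A = A k k • ρ + (A.trace - A k k) • σ := rfl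

lemma chanMap_channel {n : ℕ} (k : Fin n) (ρ σ : Matrix (Fin n) (Fin n) ℂ)
    (hρ : ρ.PosSemidef) (hσ : σ.PosSemidef) (hρtr : ρ.trace = 1) (hσtr : σ.trace = 1) :
    IsQuantumChannel (chanMap k ρ σ) := by
  constructor
  · intro m A hA
    have hrepr : tensorId (chanMap k ρ σ) m A =
        Matrix.kroneckerMap (· * ·) ρ (A.submatrix (fun p => (k, p)) (fun q => (k, q)))
        + Matrix.kroneckerMap (· * ·) σ
            (∑ i ∈ Finset.univ.erase k,
              A.submatrix (fun p => (i, p)) (fun q => (i, q))) := by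
      ext ⟨p1, p2⟩ ⟨q1, q2⟩
      simp only [tensorId, chanMap_apply, Matrix.of_apply, Matrix.add_apply,
        Matrix.kroneckerMap_apply, Matrix.smul_apply, smul_eq_mul, Matrix.trace,
        Matrix.diag_apply, Matrix.submatrix_apply, Matrix.sum_apply]
      rw [← Finset.add_sum_erase _ _ (Finset.mem_univ k)]
      ring
    rw [hrepr]
    refine (aux_posSemidef_kron hρ (hA.submatrix _)).add
      (aux_posSemidef_kron hσ (aux_posSemidef_sum _ _ fun i _ => hA.submatrix _))
  · intro A
    rw [chanMap_apply, Matrix.trace_add, Matrix.trace_smul, Matrix.trace_smul,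
      hρtr, hσtr]
    simp

/-- If `d` has positive entries summing to `1` and `d_k` is minimal, then the pure state
`|e_k⟩⟨e_k|` is maximal w.r.t. `D`-majorization: every density matrix `ρ` satisfies
`ρ ≺_D |e_k⟩⟨e_k|`. -/
theorem pure_state_maximal
    {n : ℕ} (d : Fin n → ℝ) (hd : ∀ i, 0 < d i) (hsum : ∑ i, d i = 1)
    (k : Fin n) (hk : ∀ i, d k ≤ d i)
    (ρ : Matrix (Fin n) (Fin n) ℂ) (hρ : ρ.PosSemidef) (hρtr : ρ.trace = 1) :
    ∃ T : Matrix (Fin n) (Fin n) ℂ →ₗ[ℂ] Matrix (Fin n) (Fin n) ℂ,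
      IsQuantumChannel T ∧
      T (Matrix.diagonal fun i => (d i : ℂ)) = (Matrix.diagonal fun i => (d i : ℂ)) ∧
      T (Matrix.single k k 1) = ρ := by
  have hdk1 : d k ≤ 1 := by
    calc d k ≤ ∑ i, d i := Finset.single_le_sum (fun i _ => (hd i).le) (Finset.mem_univ k)
      _ = 1 := hsum
  have hDtr : (Matrix.diagonal fun i => (d i : ℂ)).trace = 1 := by
    rw [Matrix.trace_diagonal]
    rw [show (1 : ℂ) = ((1 : ℝ) : ℂ) by norm_num, ← hsum]
    push_cast
    rfl
  rcases lt_or_eq_of_le hdk1 with hc | hc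
  · -- d k < 1
    have hne : (1 - d k : ℝ) ≠ 0 := by linarith
    set σ : Matrix (Fin n) (Fin n) ℂ :=
      (((1 - d k)⁻¹ : ℝ) : ℂ) • ((Matrix.diagonal fun i => (d i : ℂ)) - (d k : ℂ) • ρ)
      with hσdef
    have hσps : σ.PosSemidef :=
      aux_posSemidef_smul (aux_key d hd k hk hρ hρtr) (inv_nonneg.mpr (by linarith))
    have hσtr : σ.trace = 1 := by
      rw [hσdef, Matrix.trace_smul, Matrix.trace_sub, hDtr, Matrix.trace_smul, hρtr,
        smul_eq_mul, smul_eq_mul, mul_one]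
      rw [show ((1:ℂ) - (d k : ℂ)) = (((1 - d k : ℝ)) : ℂ) by push_cast; ring]
      rw [← Complex.ofReal_mul, inv_mul_cancel₀ hne]
      norm_num
    refine ⟨chanMap k ρ σ, chanMap_channel k ρ σ hρ hσps hρtr hσtr, ?_, ?_⟩
    · rw [chanMap_apply, hDtr, Matrix.diagonal_apply_eq]
      rw [show ((1:ℂ) - (d k : ℂ)) = (((1 - d k : ℝ)) : ℂ) by push_cast; ring]
      rw [hσdef, smul_smul, ← Complex.ofReal_mul, mul_inv_cancel₀ hne]
      simp
    · rw [chanMap_apply, Matrix.trace_single_eq_same, Matrix.single_apply_same]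
      simp
  · -- d k = 1 : Fin n has only the element k
    have huniq : ∀ i : Fin n, i = k := by
      intro i
      by_contra hne
      have h1 : d k + ∑ j ∈ Finset.univ.erase k, d j = ∑ j, d j :=
        Finset.add_sum_erase _ _ (Finset.mem_univ k)
      have h2 : d i ≤ ∑ j ∈ Finset.univ.erase k, d j :=
        Finset.single_le_sum (fun j _ => (hd j).le)
          (Finset.mem_erase.mpr ⟨hne, Finset.mem_univ i⟩)
      have := hd i
      rw [hsum] at h1
      linarith
    have huniv : (Finset.univ : Finset (Fin n)) = {k} := by
      ext i
      simp [huniq i]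
    have hρkk : ρ k k = 1 := by
      have h := hρtr
      rw [Matrix.trace, huniv, Finset.sum_singleton] at h
      exact h
    have hstd : Matrix.single k k 1 = ρ := by
      ext i j
      rw [huniq i, huniq j, Matrix.single_apply_same, hρkk]
    refine ⟨LinearMap.id, ⟨?_, fun A => rfl⟩, rfl, hstd⟩
    intro m A hA
    have : tensorId (LinearMap.id
        (R := ℂ) (M := Matrix (Fin n) (Fin n) ℂ)) m A = A := by
      ext ⟨p1, p2⟩ ⟨q1, q2⟩
      rfl
    rwa [this]
end

section
/- Let d ∈ ℝⁿ with strictly positive entries, Σⱼ dⱼ = 1, D = diag(d), and suppose the minimal entry d_k of d is attained at a unique index k. If ω is a density matrix such that some quantum channel T with T(D) = D satisfies T(ω) = |e_k⟩⟨e_k|, then ω = |e_k⟩⟨e_k|. -/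
open Matrix
open scoped ComplexOrder

namespace QCAux

variable {m : Type*} [Fintype m] [DecidableEq m]

lemma star_single (i : m) : (star (Pi.single i 1 : m → ℂ)) = Pi.single i 1 := by
  ext j; by_cases h : j = i <;> simp [Pi.single_apply, h]

lemma dp_single (M : Matrix m m ℂ) (i : m) :
    star (Pi.single i 1 : m → ℂ) ⬝ᵥ M *ᵥ (Pi.single i 1) = M i i := by
  rw [star_single, single_dotProduct, mulVec_single]
  simp

lemma psd_diag_nonneg {M : Matrix m m ℂ} (h : M.PosSemidef) (i : m) : 0 ≤ M i i := by
  have := h.dotProduct_mulVec_nonneg (Pi.single i 1)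
  rwa [dp_single] at this

lemma psd_trace_nonneg {M : Matrix m m ℂ} (h : M.PosSemidef) : 0 ≤ M.trace := by
  exact Finset.sum_nonneg fun i _ => psd_diag_nonneg h i

lemma posSemidef_iff_eq_transpose_mul_self {A : Matrix m m ℂ} :
    A.PosSemidef ↔ ∃ B : Matrix m m ℂ, A = Bᴴ * B := by
  open scoped MatrixOrder in
  constructor
  · intro h
    obtain ⟨B, hB⟩ := CStarAlgebra.nonneg_iff_eq_star_mul_self.mp h.nonneg
    exact ⟨B, hB⟩
  · rintro ⟨B, rfl⟩
    exact posSemidef_conjTranspose_mul_self B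

lemma trace_mul_nonneg {P Q : Matrix m m ℂ} (hP : P.PosSemidef) (hQ : Q.PosSemidef) :
    0 ≤ (P * Q).trace := by
  obtain ⟨B, rfl⟩ := posSemidef_iff_eq_transpose_mul_self.mp hQ
  have : (P * (Bᴴ * B)).trace = (B * P * Bᴴ).trace := by
    rw [← Matrix.mul_assoc, Matrix.trace_mul_comm, Matrix.mul_assoc]
  rw [this]
  exact psd_trace_nonneg (hP.mul_mul_conjTranspose_same B)

lemma psd_trace_zero {M : Matrix m m ℂ} (h : M.PosSemidef) (htr : M.trace = 0) : M = 0 := by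
  have hdiag : ∀ i, M i i = 0 := by
    intro i
    have := (Finset.sum_eq_zero_iff_of_nonneg (fun i _ => psd_diag_nonneg h i)).mp htr
    exact this i (Finset.mem_univ i)
  have hcol : ∀ i, M *ᵥ Pi.single i 1 = 0 := by
    intro i
    rw [← h.dotProduct_mulVec_zero_iff, dp_single]
    exact hdiag i
  ext i j
  have := congrFun (hcol j) i
  simpa [mulVec_single] using this

lemma trace_mul_eq_zero {P Q : Matrix m m ℂ} (hP : P.PosSemidef) (hQ : Q.PosSemidef)
    (h : (P * Q).trace = 0) : P * Q = 0 := by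
  obtain ⟨B, hB⟩ := posSemidef_iff_eq_transpose_mul_self.mp hQ
  obtain ⟨C, hC⟩ := posSemidef_iff_eq_transpose_mul_self.mp hP
  have h1 : (B * P * Bᴴ).trace = 0 := by
    calc (B * P * Bᴴ).trace = (Bᴴ * B * P).trace := Matrix.trace_mul_cycle B P Bᴴ ▸ rfl
      _ = (P * (Bᴴ * B)).trace := Matrix.trace_mul_comm _ _
      _ = (P * Q).trace := by rw [← hB]
      _ = 0 := h
  have h2 : B * P * Bᴴ = 0 := psd_trace_zero (hP.mul_mul_conjTranspose_same B) h1
  have h3 : C * Bᴴ = 0 := by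
    have : (C * Bᴴ)ᴴ * (C * Bᴴ) = 0 := by
      rw [conjTranspose_mul, conjTranspose_conjTranspose]
      calc B * Cᴴ * (C * Bᴴ) = B * (Cᴴ * C) * Bᴴ := by
            simp only [Matrix.mul_assoc]
        _ = 0 := by rw [← hC, h2]
    exact conjTranspose_mul_self_eq_zero.mp this
  calc P * Q = Cᴴ * (C * Bᴴ) * B := by rw [hC, hB]; simp only [Matrix.mul_assoc]
    _ = 0 := by rw [h3]; simp

variable {m : Type*} [Fintype m] [DecidableEq m]

/-- outer product vvᴴ -/
noncomputable def outer (v : m → ℂ) : Matrix m m ℂ := vecMulVec v (star v)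

lemma outer_apply (v : m → ℂ) (i j : m) : outer v i j = v i * star (v j) := rfl

lemma outer_posSemidef (v : m → ℂ) : (outer v).PosSemidef := by
  have : outer v = replicateCol (Fin 1) v * (replicateCol (Fin 1) v)ᴴ := by
    ext i j
    simp [outer, vecMulVec, mul_apply, conjTranspose_apply]
  rw [this]
  exact posSemidef_self_mul_conjTranspose _

lemma dotProduct_eq_trace (v : m → ℂ) (M : Matrix m m ℂ) :
    star v ⬝ᵥ M *ᵥ v = (outer v * M).trace := by
  simp only [dotProduct, mulVec, trace, diag_apply, mul_apply, outer_apply, Finset.mul_sum,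
    Finset.sum_mul, Pi.star_apply]
  rw [Finset.sum_comm]
  congr 1; ext i; congr 1; ext j; ring

lemma trace_mul_diagonal (M : Matrix m m ℂ) (r : m → ℂ) :
    (M * diagonal r).trace = ∑ i, M i i * r i := by
  simp [trace, mul_diagonal]

lemma conjTranspose_stdBasisMatrix (i j : m) :
    (single i j (1:ℂ))ᴴ = single j i 1 := by
  ext a b
  simp [single, conjTranspose_apply, apply_ite (star : ℂ → ℂ), and_comm]

variable {m : Type*} [Fintype m] [DecidableEq m]

lemma trace_eq_sum_eigenvalues {A : Matrix m m ℂ} (hA : A.IsHermitian) :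
    A.trace = ∑ i, (hA.eigenvalues i : ℂ) := by
  conv_lhs => rw [hA.spectral_theorem, Unitary.conjStarAlgAut_apply]
  rw [Matrix.trace_mul_cycle]
  rw [show (star (hA.eigenvectorUnitary : Matrix m m ℂ)) * (hA.eigenvectorUnitary : Matrix m m ℂ)
      = 1 from mem_unitaryGroup_iff'.mp hA.eigenvectorUnitary.2]
  simp [Matrix.trace_diagonal]

lemma one_sub_psd {ω : Matrix m m ℂ} (hω : ω.PosSemidef) (htr : ω.trace = 1) :
    ((1 : Matrix m m ℂ) - ω).PosSemidef := by
  have hsum : ∑ i, hω.1.eigenvalues i = 1 := by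
    have := trace_eq_sum_eigenvalues hω.1
    rw [htr] at this
    exact_mod_cast this.symm
  have hle : ∀ i, hω.1.eigenvalues i ≤ 1 := by
    intro i
    rw [← hsum]
    exact Finset.single_le_sum (fun j _ => hω.eigenvalues_nonneg j) (Finset.mem_univ i)
  have key : (1 : Matrix m m ℂ) - ω =
      (hω.1.eigenvectorUnitary : Matrix m m ℂ) *
        diagonal (fun i => (1 - hω.1.eigenvalues i : ℂ)) *
        (hω.1.eigenvectorUnitary : Matrix m m ℂ)ᴴ := by
    have hU : (hω.1.eigenvectorUnitary : Matrix m m ℂ) *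
        (star (hω.1.eigenvectorUnitary : Matrix m m ℂ)) = 1 :=
      mem_unitaryGroup_iff.mp hω.1.eigenvectorUnitary.2
    conv_lhs => rw [hω.1.spectral_theorem, Unitary.conjStarAlgAut_apply]
    rw [← Matrix.star_eq_conjTranspose]
    have : diagonal (fun i => (1 - hω.1.eigenvalues i : ℂ)) =
        1 - diagonal (RCLike.ofReal ∘ hω.1.eigenvalues) := by
      rw [← diagonal_one, diagonal_sub]
      rfl
    rw [this, Matrix.mul_sub, Matrix.mul_one, Matrix.sub_mul, hU]
  rw [key]
  apply Matrix.PosSemidef.mul_mul_conjTranspose_same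
  rw [posSemidef_diagonal_iff]
  intro i
  rw [Complex.le_def]
  simp [sub_nonneg, hle i]

lemma hermitian_eq_sub_psd {H : Matrix m m ℂ} (hH : H.IsHermitian) :
    ∃ P N : Matrix m m ℂ, P.PosSemidef ∧ N.PosSemidef ∧ H = P - N := by
  set U : Matrix m m ℂ := (hH.eigenvectorUnitary : Matrix m m ℂ)
  refine ⟨U * diagonal (fun i => ((max (hH.eigenvalues i) 0 : ℝ) : ℂ)) * Uᴴ,
    U * diagonal (fun i => ((max (-hH.eigenvalues i) 0 : ℝ) : ℂ)) * Uᴴ, ?_, ?_, ?_⟩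
  · apply Matrix.PosSemidef.mul_mul_conjTranspose_same
    rw [posSemidef_diagonal_iff]
    intro i; rw [Complex.le_def]; simp [le_max_right]
  · apply Matrix.PosSemidef.mul_mul_conjTranspose_same
    rw [posSemidef_diagonal_iff]
    intro i; rw [Complex.le_def]; simp [le_max_right]
  · conv_lhs => rw [hH.spectral_theorem, Unitary.conjStarAlgAut_apply]
    rw [← Matrix.star_eq_conjTranspose, ← Matrix.sub_mul, ← Matrix.mul_sub, diagonal_sub]
    have : (RCLike.ofReal ∘ hH.eigenvalues : m → ℂ) =
        fun i => ((max (hH.eigenvalues i) 0 : ℝ) : ℂ) - ((max (-hH.eigenvalues i) 0 : ℝ) : ℂ) := by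
      funext i
      rw [Function.comp_apply, ← Complex.ofReal_sub, max_zero_sub_max_neg_zero_eq_self]
      rfl
    rw [this]

variable {n : ℕ} {T : Matrix (Fin n) (Fin n) ℂ →ₗ[ℂ] Matrix (Fin n) (Fin n) ℂ}

/-- The channel is positive: from complete positivity at m = 1. -/
lemma channel_pos (hT : IsQuantumChannel T) {X : Matrix (Fin n) (Fin n) ℂ}
    (hX : X.PosSemidef) : (T X).PosSemidef := by
  set A : Matrix (Fin n × Fin 1) (Fin n × Fin 1) ℂ := Matrix.of fun p q => X p.1 q.1 with hA
  have hApsd : A.PosSemidef := by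
    rw [posSemidef_iff_dotProduct_mulVec]
    constructor
    · ext p q
      have := congrFun (congrFun hX.1 p.1) q.1
      simpa [hA, conjTranspose_apply] using this
    · intro v
      have := hX.dotProduct_mulVec_nonneg (fun i => v (i, 0))
      convert this using 1
      simp only [dotProduct, mulVec, Fintype.sum_prod_type, Fin.sum_univ_one]
      rfl
  have hTA := hT.1 1 A hApsd
  have key : ∀ (p q : Fin n × Fin 1), tensorId T 1 A p q = T X p.1 q.1 := by
    intro p q
    rfl
  rw [posSemidef_iff_dotProduct_mulVec]
  constructor
  · ext i j
    have := congrFun (congrFun hTA.1 (i, 0)) (j, 0)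
    simpa [conjTranspose_apply, key] using this
  · intro w
    have := hTA.dotProduct_mulVec_nonneg (fun p => w p.1)
    convert this using 1
    simp only [dotProduct, mulVec, Fintype.sum_prod_type, Fin.sum_univ_one, key]
    rfl

lemma channel_isHermitian (hT : IsQuantumChannel T) {H : Matrix (Fin n) (Fin n) ℂ}
    (hH : H.IsHermitian) : (T H).IsHermitian := by
  obtain ⟨P, N, hP, hN, hPN⟩ := hermitian_eq_sub_psd hH
  rw [hPN, map_sub]
  exact (channel_pos hT hP).1.sub (channel_pos hT hN).1

lemma channel_conjTranspose (hT : IsQuantumChannel T) (X : Matrix (Fin n) (Fin n) ℂ) :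
    T Xᴴ = (T X)ᴴ := by
  have hA : (X + Xᴴ).IsHermitian := by
    unfold Matrix.IsHermitian
    rw [conjTranspose_add, conjTranspose_conjTranspose, add_comm]
  have hB : ((Complex.I : ℂ) • (X - Xᴴ)).IsHermitian := by
    unfold Matrix.IsHermitian
    rw [conjTranspose_smul, conjTranspose_sub, conjTranspose_conjTranspose, Complex.star_def,
      Complex.conj_I, neg_smul, smul_sub, smul_sub, neg_sub]
  have h1 : (T X)ᴴ + (T Xᴴ)ᴴ = T X + T Xᴴ := by
    have := channel_isHermitian hT hA
    unfold Matrix.IsHermitian at this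
    rw [map_add] at this
    rw [← conjTranspose_add, this]
  have h2 : (T X)ᴴ - (T Xᴴ)ᴴ = T Xᴴ - T X := by
    have := channel_isHermitian hT hB
    unfold Matrix.IsHermitian at this
    rw [_root_.map_smul, map_sub, conjTranspose_smul, conjTranspose_sub, Complex.star_def,
      Complex.conj_I, neg_smul] at this
    have h3 := congrArg (fun M => (Complex.I : ℂ) • M) this
    simp only [smul_neg, smul_smul, Complex.I_mul_I, neg_neg, neg_smul, one_smul] at h3
    rw [h3]
    abel
  have h4 : (2 : ℂ) • (T Xᴴ) = (2 : ℂ) • (T X)ᴴ := by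
    have := congrArg₂ (· + ·) h1 h2
    rw [two_smul, two_smul]
    calc T Xᴴ + T Xᴴ = T X + T Xᴴ + (T Xᴴ - T X) := by abel
      _ = (T X)ᴴ + (T Xᴴ)ᴴ + ((T X)ᴴ - (T Xᴴ)ᴴ) := by rw [h1, h2]
      _ = (T X)ᴴ + (T X)ᴴ := by abel
  have := smul_right_injective (Matrix (Fin n) (Fin n) ℂ) (two_ne_zero (α := ℂ)) h4
  exact this

end QCAux

/-- If the minimal entry `d_k` of `d` is attained at a unique index `k`, then `|e_k⟩⟨e_k|`
is the unique maximal state: any density matrix `ω` with `|e_k⟩⟨e_k| ≺_D ω` (via a channel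
fixing `D = diag d` sending `ω` to `|e_k⟩⟨e_k|`) equals `|e_k⟩⟨e_k|`. -/
theorem pure_state_unique_maximal
    {n : ℕ} (d : Fin n → ℝ) (hd : ∀ i, 0 < d i) (hsum : ∑ i, d i = 1)
    (k : Fin n) (hk : ∀ i, i ≠ k → d k < d i)
    (ω : Matrix (Fin n) (Fin n) ℂ) (hω : ω.PosSemidef) (hωtr : ω.trace = 1)
    (T : Matrix (Fin n) (Fin n) ℂ →ₗ[ℂ] Matrix (Fin n) (Fin n) ℂ)
    (hT : IsQuantumChannel T)
    (hfix : T (Matrix.diagonal fun i => (d i : ℂ)) = (Matrix.diagonal fun i => (d i : ℂ)))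
    (hmap : T ω = Matrix.single k k 1) :
    ω = Matrix.single k k 1 := by
  classical
  set D : Matrix (Fin n) (Fin n) ℂ := Matrix.diagonal fun i => (d i : ℂ) with hDdef
  set r : Fin n → ℂ := fun i => if i = k then 0 else 1 with hrdef
  set R : Matrix (Fin n) (Fin n) ℂ := Matrix.diagonal r with hRdef
  set Pk : Matrix (Fin n) (Fin n) ℂ := Matrix.single k k 1 with hPkdef
  have hPkdiag : Pk = Matrix.diagonal (fun i => if i = k then (1:ℂ) else 0) := by
    ext i j
    by_cases hi : i = j
    · subst hi
      by_cases h : i = k <;> simp [hPkdef, Matrix.single, h, eq_comm]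
    · by_cases h2 : k = i <;> by_cases h3 : k = j <;>
        simp_all [hPkdef, Matrix.single, Matrix.diagonal]
  have hRPk : (1 : Matrix (Fin n) (Fin n) ℂ) - R = Pk := by
    rw [hPkdiag]
    ext i j
    rcases eq_or_ne i j with rfl | hij
    · by_cases h : i = k <;>
        simp [Matrix.sub_apply, hRdef, hrdef, Matrix.one_apply, h]
    · simp [Matrix.sub_apply, hRdef, hrdef, Matrix.one_apply, hij,
        Matrix.diagonal_apply_ne _ hij]
  have hRherm : R.IsHermitian := by
    apply Matrix.isHermitian_diagonal_of_self_adjoint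
    funext i
    by_cases h : i = k <;> simp [hrdef, h]
  have hRpsd : R.PosSemidef := by
    rw [hRdef, Matrix.posSemidef_diagonal_iff]
    intro i
    by_cases h : i = k <;> simp [hrdef, h]
  have hPkpsd : Pk.PosSemidef := by
    rw [hPkdiag, Matrix.posSemidef_diagonal_iff]
    intro i
    by_cases h : i = k <;> simp [h]
  have hDpsd : D.PosSemidef := by
    rw [hDdef, Matrix.posSemidef_diagonal_iff]
    intro i
    rw [Complex.le_def]
    simp [(hd i).le]
  set Q : Matrix (Fin n) (Fin n) ℂ :=
    Matrix.of (fun p q => ((T (Matrix.single q p 1)) * R).trace) with hQdef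
  -- the two expansions
  have hTexp : ∀ X : Matrix (Fin n) (Fin n) ℂ,
      ((T X) * R).trace = ∑ p, ∑ q, X p q * ((T (Matrix.single p q 1)) * R).trace := by
    intro X
    conv_lhs => rw [Matrix.matrix_eq_sum_single X]
    rw [map_sum, Finset.sum_mul, Matrix.trace_sum]
    refine Finset.sum_congr rfl fun p _ => ?_
    rw [map_sum, Finset.sum_mul, Matrix.trace_sum]
    refine Finset.sum_congr rfl fun q _ => ?_
    have hsm : Matrix.single p q (X p q) = X p q • Matrix.single p q (1:ℂ) := by
      rw [Matrix.smul_single, smul_eq_mul, mul_one]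
    rw [hsm, _root_.map_smul, Matrix.smul_mul, Matrix.trace_smul, smul_eq_mul]
  have htr : ∀ X : Matrix (Fin n) (Fin n) ℂ, (X * Q).trace = ((T X) * R).trace := by
    intro X
    rw [hTexp X]
    simp only [Matrix.trace, Matrix.diag_apply, Matrix.mul_apply, hQdef, Matrix.of_apply]
  have hdpQ : ∀ v : Fin n → ℂ, star v ⬝ᵥ Q *ᵥ v = ((T (QCAux.outer v)) * R).trace := by
    intro v
    rw [QCAux.dotProduct_eq_trace, htr]
  have hQherm : Q.IsHermitian := by
    ext p q
    rw [Matrix.conjTranspose_apply, hQdef, Matrix.of_apply, Matrix.of_apply, ← Matrix.trace_conjTranspose,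
      Matrix.conjTranspose_mul, hRherm.eq, ← QCAux.channel_conjTranspose hT,
      QCAux.conjTranspose_stdBasisMatrix, Matrix.trace_mul_comm]
  have hQpsd : Q.PosSemidef := by
    refine posSemidef_iff_dotProduct_mulVec.mpr ⟨hQherm, fun v => ?_⟩
    rw [hdpQ v]
    exact QCAux.trace_mul_nonneg (QCAux.channel_pos hT (QCAux.outer_posSemidef v)) hRpsd
  set S : Matrix (Fin n) (Fin n) ℂ := 1 - Q with hSdef
  have hSherm : S.IsHermitian := Matrix.isHermitian_one.sub hQherm
  have hSpsd : S.PosSemidef := by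
    refine posSemidef_iff_dotProduct_mulVec.mpr ⟨hSherm, fun v => ?_⟩
    have e1 : star v ⬝ᵥ S *ᵥ v = (QCAux.outer v * S).trace := QCAux.dotProduct_eq_trace v S
    have e2 : (QCAux.outer v * S).trace
        = (QCAux.outer v).trace - ((T (QCAux.outer v)) * R).trace := by
      rw [hSdef, Matrix.mul_sub, Matrix.mul_one, Matrix.trace_sub, htr]
    have e3 : (QCAux.outer v).trace = (T (QCAux.outer v)).trace := (hT.2 _).symm
    have e4 : (T (QCAux.outer v)).trace - ((T (QCAux.outer v)) * R).trace
        = ((T (QCAux.outer v)) * Pk).trace := by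
      rw [← hRPk, Matrix.mul_sub, Matrix.mul_one, Matrix.trace_sub]
    rw [e1, e2, e3, e4]
    exact QCAux.trace_mul_nonneg (QCAux.channel_pos hT (QCAux.outer_posSemidef v)) hPkpsd
  -- ω * Q = 0
  have hωQtr : (ω * Q).trace = 0 := by
    rw [htr, hmap, hPkdiag, hRdef, Matrix.diagonal_mul_diagonal, Matrix.trace_diagonal]
    apply Finset.sum_eq_zero
    intro i _
    by_cases h : i = k <;> simp [hrdef, h]
  have hωQ : ω * Q = 0 := QCAux.trace_mul_eq_zero hω hQpsd hωQtr
  have hQω : Q * ω = 0 := by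
    have := congrArg Matrix.conjTranspose hωQ
    rwa [Matrix.conjTranspose_mul, hQherm.eq, hω.1.eq, Matrix.conjTranspose_zero] at this
  have hSω : S * ω = ω := by rw [hSdef, Matrix.sub_mul, Matrix.one_mul, hQω, sub_zero]
  have hωS : ω * S = ω := by rw [hSdef, Matrix.mul_sub, Matrix.mul_one, hωQ, sub_zero]
  have hωSS : S * ω * S = ω := by rw [hSω, hωS]
  -- trace inequalities
  have traceD_mono : ∀ A B : Matrix (Fin n) (Fin n) ℂ, (B - A).PosSemidef →
      (D * A).trace ≤ (D * B).trace := by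
    intro A B hBA
    have h0 : 0 ≤ (D * (B - A)).trace := QCAux.trace_mul_nonneg hDpsd hBA
    rw [Matrix.mul_sub, Matrix.trace_sub] at h0
    exact sub_nonneg.mp h0
  have hstep1 : (D * ω).trace ≤ (D * (S * S)).trace := by
    have h1ω := QCAux.one_sub_psd hω hωtr
    have hps := h1ω.mul_mul_conjTranspose_same S
    rw [hSherm.eq] at hps
    have heq : S * (1 - ω) * S = S * S - S * ω * S := by noncomm_ring
    rw [heq] at hps
    have h2 := traceD_mono (S * ω * S) (S * S) hps
    rwa [hωSS] at h2
  have hstep2 : (D * (S * S)).trace ≤ (D * S).trace := by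
    apply traceD_mono
    open scoped MatrixOrder in set W := CFC.sqrt S with hWdef
    have hWW : W * W = S := by
      open scoped MatrixOrder in exact CFC.sqrt_mul_sqrt_self S hSpsd.nonneg
    have hWherm : W.IsHermitian := by
      open scoped MatrixOrder in exact (CFC.sqrt_nonneg S).posSemidef.1
    have hQS : Q = 1 - S := by rw [hSdef]; abel
    have key : W * Q * Wᴴ = S - S * S := by
      rw [hWherm.eq, hQS, ← hWW]
      noncomm_ring
    rw [← key]
    exact hQpsd.mul_mul_conjTranspose_same W
  have hDR : (D * R).trace = 1 - (d k : ℂ) := by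
    rw [hDdef, hRdef, Matrix.diagonal_mul_diagonal, Matrix.trace_diagonal]
    have h1 : ∀ i, (d i : ℂ) * r i = (d i : ℂ) - (if i = k then (d i : ℂ) else 0) := by
      intro i; by_cases h : i = k <;> simp [hrdef, h]
    rw [Finset.sum_congr rfl fun i _ => h1 i, Finset.sum_sub_distrib,
      Finset.sum_ite_eq' Finset.univ k]
    have h2 : ∑ i, (d i : ℂ) = 1 := by rw [← Complex.ofReal_sum, hsum, Complex.ofReal_one]
    simp [h2]
  have hDtr : D.trace = 1 := by
    rw [hDdef, Matrix.trace_diagonal, ← Complex.ofReal_sum, hsum, Complex.ofReal_one]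
  have hDS : (D * S).trace = (d k : ℂ) := by
    have hDQ : (D * Q).trace = (D * R).trace := by rw [htr D, hfix]
    rw [hSdef, Matrix.mul_sub, Matrix.mul_one, Matrix.trace_sub, hDtr, hDQ, hDR]
    ring
  have hDω : (D * ω).trace ≤ (d k : ℂ) := by
    rw [← hDS]
    exact hstep1.trans hstep2
  -- extract real diagonal
  have hdiagnn : ∀ i, 0 ≤ ω i i := fun i => QCAux.psd_diag_nonneg hω i
  set w : Fin n → ℝ := fun i => (ω i i).re with hwdef
  have hwnn : ∀ i, 0 ≤ w i := by
    intro i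
    have := hdiagnn i
    rw [Complex.le_def] at this
    simpa using this.1
  have hωii : ∀ i, ω i i = (w i : ℂ) := by
    intro i
    have := hdiagnn i
    rw [Complex.le_def] at this
    apply Complex.ext
    · simp [hwdef]
    · simp [hwdef, ← this.2]
  have hwsum : ∑ i, w i = 1 := by
    have : ω.trace = ((∑ i, w i : ℝ) : ℂ) := by
      rw [Matrix.trace]
      push_cast
      exact Finset.sum_congr rfl fun i _ => hωii i
    rw [hωtr] at this
    exact_mod_cast this.symm
  have hDωval : (D * ω).trace = ((∑ i, d i * w i : ℝ) : ℂ) := by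
    have : ∀ i, (D * ω) i i = ((d i * w i : ℝ) : ℂ) := by
      intro i
      rw [hDdef, Matrix.diagonal_mul, hωii i]
      push_cast
      ring
    rw [Matrix.trace, Complex.ofReal_sum]
    simp only [Matrix.diag_apply]
    exact Finset.sum_congr rfl fun i _ => this i
  have hreal : ∑ i, d i * w i ≤ d k := by
    have := hDω
    rw [hDωval] at this
    exact_mod_cast this
  -- each w i = 0 for i ≠ k
  have hwzero : ∀ i, i ≠ k → w i = 0 := by
    intro i0 hi0
    have hterm : ∀ i, d k * w i + (if i = i0 then (d i0 - d k) * w i0 else 0) ≤ d i * w i := by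
      intro i
      by_cases h : i = i0
      · subst h; simp; linarith [hwnn i]
      · simp only [h, if_false, add_zero]
        rcases eq_or_ne i k with rfl | hik
        · linarith [hwnn i]
        · exact mul_le_mul_of_nonneg_right (hk i hik).le (hwnn i)
    have hs := Finset.sum_le_sum (s := Finset.univ) (fun i _ => hterm i)
    rw [Finset.sum_add_distrib, Finset.sum_ite_eq' Finset.univ i0, ← Finset.mul_sum, hwsum] at hs
    simp only [Finset.mem_univ, if_true, mul_one] at hs
    have h2 : (d i0 - d k) * w i0 ≤ 0 := by linarith [hreal]
    have h3 : 0 < d i0 - d k := by linarith [hk i0 hi0]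
    nlinarith [hwnn i0]
  have hcol : ∀ i, i ≠ k → ∀ j, ω j i = 0 := by
    intro i hi j
    have hii : ω i i = 0 := by rw [hωii i, hwzero i hi]; simp
    have hmv : ω *ᵥ Pi.single i 1 = 0 := by
      rw [← hω.dotProduct_mulVec_zero_iff, QCAux.dp_single]
      exact hii
    have := congrFun hmv j
    simpa [Matrix.mulVec_single] using this
  have hrow : ∀ i, i ≠ k → ∀ j, ω i j = 0 := by
    intro i hi j
    have : ω i j = star (ω j i) := by
      conv_lhs => rw [← hω.1.eq]
      rw [Matrix.conjTranspose_apply]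
    rw [this, hcol i hi j, star_zero]
  have hkk : ω k k = 1 := by
    have : ω.trace = ω k k := by
      rw [Matrix.trace]
      apply Finset.sum_eq_single k
      · intro i _ hi
        exact (hωii i).trans (by rw [hwzero i hi]; simp)
      · intro h; exact absurd (Finset.mem_univ k) h
    rw [← this, hωtr]
  ext i j
  rw [hPkdef]
  by_cases hi : i = k
  · by_cases hj : j = k
    · rw [hi, hj, hkk, Matrix.single_apply_same]
    · rw [hcol j hj i]
      exact (Matrix.single_apply_of_ne k k 1 i j (fun (h : k = i ∧ k = j) => hj h.2.symm)).symm
  · rw [hrow i hi j]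
    exact (Matrix.single_apply_of_ne k k 1 i j (fun (h : k = i ∧ k = j) => hi h.1.symm)).symm
end
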